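/- For a measure-preserving flow Φ = {φ^t} on a probability space (M,μ) and any t ∈ ℝ, the metric entropy satisfies h_μ(φ^t) = |t| · h_μ(φ¹). -/

import Mathlib

open MeasureTheory Filter Topology

namespace AbramovAux

/-- Per-term Gibbs inequality. -/
lemma gibbs_term {a b : ℝ} (ha : 0 ≤ a) (hb : 0 ≤ b) (hab : b = 0 → a = 0) :
    a * Real.log b - a * Real.log a ≤ b - a := by
  rcases eq_or_lt_of_le ha with h0 | hapos
  · simp only [← h0, zero_mul, sub_zero, sub_self]; linarith
  · have hbpos : 0 < b := by
      rcases eq_or_lt_of_le hb with h0' | h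
      · exact absurd (hab h0'.symm) (by linarith)
      · exact h
    have h1 : a * Real.log b - a * Real.log a = a * Real.log (b / a) := by
      rw [Real.log_div hbpos.ne' hapos.ne']; ring
    rw [h1]
    have h2 : Real.log (b / a) ≤ b / a - 1 :=
      Real.log_le_sub_one_of_pos (div_pos hbpos hapos)
    calc a * Real.log (b / a) ≤ a * (b / a - 1) :=
          mul_le_mul_of_nonneg_left h2 ha
    _ = b - a := by field_simp

lemma gibbs_sum {α : Type*} (F : Finset α) (a b : α → ℝ)
    (ha : ∀ i ∈ F, 0 ≤ a i) (hb : ∀ i ∈ F, 0 ≤ b i) (hab : ∀ i ∈ F, b i = 0 → a i = 0) :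
    ∑ i ∈ F, a i * Real.log (b i) - ∑ i ∈ F, a i * Real.log (a i)
      ≤ (∑ i ∈ F, b i) - ∑ i ∈ F, a i := by
  rw [← Finset.sum_sub_distrib, ← Finset.sum_sub_distrib]
  exact Finset.sum_le_sum fun i hi => gibbs_term (ha i hi) (hb i hi) (hab i hi)

/-- Subdivision bound: entropy of `|F|` masses summing to `S` is at most
`negMulLog S + S * log |F|`. -/
lemma sum_negMulLog_le {α : Type*} (F : Finset α) (x : α → ℝ) (hx : ∀ i ∈ F, 0 ≤ x i) :
    ∑ i ∈ F, Real.negMulLog (x i)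
      ≤ Real.negMulLog (∑ i ∈ F, x i) + (∑ i ∈ F, x i) * Real.log F.card := by
  set S := ∑ i ∈ F, x i with hS
  have hS0 : 0 ≤ S := Finset.sum_nonneg hx
  rcases eq_or_lt_of_le hS0 with h0 | hpos
  · have hz : ∀ i ∈ F, x i = 0 := by
      intro i hi
      exact (Finset.sum_eq_zero_iff_of_nonneg hx).mp h0.symm i hi
    have : ∑ i ∈ F, Real.negMulLog (x i) = 0 := by
      apply Finset.sum_eq_zero; intro i hi; rw [hz i hi, Real.negMulLog_zero]
    rw [this, ← h0]; simp
  · have hFne : F.Nonempty := by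
      by_contra hne
      rw [Finset.not_nonempty_iff_eq_empty] at hne
      rw [hne] at hS; simp at hS; rw [hS] at hpos; exact lt_irrefl _ hpos
    have hcard : 0 < (F.card : ℝ) := by
      have := Finset.card_pos.mpr hFne
      exact_mod_cast this
    have key := gibbs_sum F x (fun _ => S / F.card) hx
      (fun i _ => le_of_lt (div_pos hpos hcard))
      (fun i _ h => absurd h (ne_of_gt (div_pos hpos hcard)))
    have hsum_b : ∑ _i ∈ F, S / (F.card : ℝ) = S := by
      rw [Finset.sum_const, nsmul_eq_mul]
      field_simp
    have hlhs : ∑ i ∈ F, x i * Real.log (S / F.card) = S * (Real.log S - Real.log F.card) := by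
      rw [← Finset.sum_mul, ← hS, Real.log_div hpos.ne' hcard.ne']
    rw [hsum_b, hlhs, ← hS] at key
    have h1 : ∑ i ∈ F, Real.negMulLog (x i) = - ∑ i ∈ F, x i * Real.log (x i) := by
      rw [← Finset.sum_neg_distrib]
      exact Finset.sum_congr rfl fun i _ => by rw [Real.negMulLog]; ring
    rw [h1, Real.negMulLog]
    nlinarith [key]

lemma negMulLog_add_le {x y : ℝ} (hx : 0 ≤ x) (hy : 0 ≤ y) :
    Real.negMulLog (x + y) ≤ Real.negMulLog x + Real.negMulLog y := by
  have key : ∀ a b : ℝ, 0 ≤ a → 0 ≤ b → -(a * Real.log (a + b)) ≤ Real.negMulLog a := by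
    intro a b ha hb
    rcases eq_or_lt_of_le ha with h0 | hpos
    · simp [← h0, Real.negMulLog_zero]
    · have : Real.log a ≤ Real.log (a + b) := Real.log_le_log hpos (by linarith)
      rw [Real.negMulLog]
      nlinarith
  have h1 := key x y hx hy
  have h2 := key y x hy hx
  rw [add_comm y x] at h2
  have : Real.negMulLog (x + y) = -(x * Real.log (x + y)) + -(y * Real.log (x + y)) := by
    rw [Real.negMulLog]; ring
  linarith

lemma negMulLog_sum_le {α : Type*} (F : Finset α) (x : α → ℝ) (hx : ∀ i ∈ F, 0 ≤ x i) :
    Real.negMulLog (∑ i ∈ F, x i) ≤ ∑ i ∈ F, Real.negMulLog (x i) := by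
  induction F using Finset.cons_induction with
  | empty => simp
  | cons a s ha ih =>
    rw [Finset.sum_cons, Finset.sum_cons]
    calc Real.negMulLog (x a + ∑ i ∈ s, x i)
        ≤ Real.negMulLog (x a) + Real.negMulLog (∑ i ∈ s, x i) :=
          negMulLog_add_le (hx a (Finset.mem_cons_self a s))
            (Finset.sum_nonneg fun i hi => hx i (Finset.mem_cons_of_mem hi))
      _ ≤ Real.negMulLog (x a) + ∑ i ∈ s, Real.negMulLog (x i) := by
          have := ih (fun i hi => hx i (Finset.mem_cons_of_mem hi))
          linarith

/-- `negMulLog` almost-monotonicity: for `0 ≤ a ≤ b ≤ 1`,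
`negMulLog a ≤ negMulLog b + (b - a)`. -/
lemma negMulLog_le_of_le {a b : ℝ} (h0 : 0 ≤ a) (hab : a ≤ b) (hb1 : b ≤ 1) :
    Real.negMulLog a ≤ Real.negMulLog b + (b - a) := by
  rcases eq_or_lt_of_le h0 with hz | hpos
  · rw [← hz, Real.negMulLog_zero]
    have : 0 ≤ Real.negMulLog b := Real.negMulLog_nonneg (le_trans h0 hab) hb1
    linarith
  · have hbpos : 0 < b := lt_of_lt_of_le hpos hab
    have h1 : Real.log (b / a) ≤ b / a - 1 := Real.log_le_sub_one_of_pos (div_pos hbpos hpos)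
    have h2 : a * Real.log (b / a) ≤ b - a := by
      calc a * Real.log (b / a) ≤ a * (b / a - 1) := mul_le_mul_of_nonneg_left h1 (le_of_lt hpos)
        _ = b - a := by field_simp
    have h3 : Real.log b ≤ 0 := Real.log_nonpos (le_of_lt hbpos) hb1
    have h4 : (b - a) * Real.log b ≤ 0 :=
      mul_nonpos_of_nonneg_of_nonpos (by linarith) h3
    have h5 : Real.negMulLog a - Real.negMulLog b
        = a * Real.log (b / a) + (b - a) * Real.log b := by
      rw [Real.negMulLog, Real.negMulLog, Real.log_div hbpos.ne' hpos.ne']; ring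
    linarith

end AbramovAux

/-- Entropy of a countable measurable partition given as a coloring. -/
noncomputable def colorEntropy {M : Type*} [MeasurableSpace M] (μ : Measure M)
    {ι : Type*} [Countable ι] (c : M → ι) : ℝ :=
  ∑' i : ι, Real.negMulLog (μ (c ⁻¹' {i})).toReal

/-- Kolmogorov–Sinai (metric) entropy of a map `T` with respect to `μ`. -/
noncomputable def metricEntropy {M : Type*} [MeasurableSpace M] (T : M → M)
    (μ : Measure M) : ℝ :=
  ⨆ c : {c : M → ℕ // Measurable c ∧ (Set.range c).Finite},
    Filter.liminf
      (fun n : ℕ => colorEntropy μ (fun x (i : Fin n) => c.1 (T^[(i : ℕ)] x)) / n)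
      Filter.atTop

set_option linter.unusedSectionVars false

namespace AbramovAux

variable {M : Type*} [MeasurableSpace M] {μ : Measure M} [IsProbabilityMeasure μ]

/-- probability mass of a color -/
noncomputable def pm (μ : Measure M) {ι : Type*} (c : M → ι) (i : ι) : ℝ :=
  (μ (c ⁻¹' {i})).toReal

/-- joint coloring -/
def pair {ι κ : Type*} (c : M → ι) (d : M → κ) : M → ι × κ := fun x => (c x, d x)

lemma pm_nonneg {ι : Type*} (c : M → ι) (i : ι) : 0 ≤ pm μ c i := ENNReal.toReal_nonneg

lemma toReal_mono_meas {s t : Set M} (h : s ⊆ t) : (μ s).toReal ≤ (μ t).toReal :=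
  ENNReal.toReal_mono (measure_ne_top μ t) (measure_mono h)

lemma pm_le_one {ι : Type*} (c : M → ι) (i : ι) : pm μ c i ≤ 1 := by
  have := toReal_mono_meas (μ := μ) (Set.subset_univ (c ⁻¹' {i}))
  simpa [pm, measure_univ] using this

lemma pair_preimage {ι κ : Type*} (c : M → ι) (d : M → κ) (i : ι) (j : κ) :
    pair c d ⁻¹' {(i, j)} = c ⁻¹' {i} ∩ d ⁻¹' {j} := by
  ext x; simp [pair, Prod.ext_iff]

lemma pair_meas {ι κ : Type*} {c : M → ι} {d : M → κ}
    (hc : ∀ i, MeasurableSet (c ⁻¹' {i})) (hd : ∀ j, MeasurableSet (d ⁻¹' {j})) :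
    ∀ z : ι × κ, MeasurableSet (pair c d ⁻¹' {z}) := by
  rintro ⟨i, j⟩
  rw [pair_preimage]
  exact (hc i).inter (hd j)

lemma pair_finrange {ι κ : Type*} {c : M → ι} {d : M → κ}
    (hc : (Set.range c).Finite) (hd : (Set.range d).Finite) :
    (Set.range (pair c d)).Finite := by
  apply (hc.prod hd).subset
  rintro _ ⟨x, rfl⟩
  exact ⟨⟨x, rfl⟩, ⟨x, rfl⟩⟩

lemma comp_preimage_meas {ι κ : Type*} [Countable ι] {c : M → ι}
    (hc : ∀ i, MeasurableSet (c ⁻¹' {i})) (g : ι → κ) :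
    ∀ k, MeasurableSet ((g ∘ c) ⁻¹' {k}) := by
  intro k
  have : (g ∘ c) ⁻¹' {k} = ⋃ i ∈ (g ⁻¹' {k}), c ⁻¹' {i} := by
    ext x; simp
  rw [this]
  exact MeasurableSet.biUnion (Set.to_countable _) fun i _ => hc i

/-- decomposition of the measure of a set along the cells of a coloring -/
lemma toReal_meas_eq_sum {ι : Type*} [DecidableEq ι] {d : M → ι}
    (hd : ∀ k, MeasurableSet (d ⁻¹' {k})) {T : Finset ι} (hT : Set.range d ⊆ ↑T)
    {S : Set M} (hS : MeasurableSet S) :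
    (μ S).toReal = ∑ k ∈ T, (μ (S ∩ d ⁻¹' {k})).toReal := by
  have hcover : S = ⋃ k ∈ T, S ∩ d ⁻¹' {k} := by
    ext x
    simp only [Set.mem_iUnion, Set.mem_inter_iff, Set.mem_preimage, Set.mem_singleton_iff]
    constructor
    · intro hx; exact ⟨d x, hT ⟨x, rfl⟩, hx, rfl⟩
    · rintro ⟨k, _, hx, _⟩; exact hx
  have hdisj : (↑T : Set ι).PairwiseDisjoint fun k => S ∩ d ⁻¹' {k} := by
    intro a _ b _ hab
    apply Set.disjoint_left.mpr
    rintro x ⟨_, hxa⟩ ⟨_, hxb⟩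
    exact hab (by rw [← hxa, ← hxb])
  have h2 := measure_biUnion_finset (μ := μ) hdisj fun k _ => hS.inter (hd k)
  have h3 : μ S = ∑ p ∈ T, μ (S ∩ d ⁻¹' {p}) := by
    conv_lhs => rw [hcover]
    exact h2
  rw [h3, ENNReal.toReal_sum fun k _ => measure_ne_top μ _]

lemma colorEntropy_eq_sum {ι : Type*} [Countable ι] {c : M → ι} {T : Finset ι}
    (hT : Set.range c ⊆ ↑T) :
    colorEntropy μ c = ∑ i ∈ T, Real.negMulLog (pm μ c i) := by
  apply tsum_eq_sum
  intro b hb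
  have hemp : c ⁻¹' {b} = ∅ := by
    ext x
    simp only [Set.mem_preimage, Set.mem_singleton_iff, Set.mem_empty_iff_false, iff_false]
    intro h
    exact hb (by exact_mod_cast hT ⟨x, h⟩)
  show Real.negMulLog (μ (c ⁻¹' {b})).toReal = 0
  rw [hemp]; simp

lemma sum_pm_eq_one {ι : Type*} [DecidableEq ι] {c : M → ι}
    (hc : ∀ i, MeasurableSet (c ⁻¹' {i})) {T : Finset ι} (hT : Set.range c ⊆ ↑T) :
    ∑ i ∈ T, pm μ c i = 1 := by
  have := toReal_meas_eq_sum (μ := μ) hc hT MeasurableSet.univ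
  simp only [Set.univ_inter, measure_univ, ENNReal.toReal_one] at this
  simpa [pm] using this.symm

lemma colorEntropy_nonneg {ι : Type*} [Countable ι] (c : M → ι) :
    0 ≤ colorEntropy μ c :=
  tsum_nonneg fun i => Real.negMulLog_nonneg ENNReal.toReal_nonneg (pm_le_one c i)

lemma colorEntropy_comp_inj {ι κ : Type*} [Countable ι] [Countable κ] (c : M → ι)
    {g : ι → κ} (hg : Function.Injective g) :
    colorEntropy μ (g ∘ c) = colorEntropy μ c := by
  have key : ∀ i : ι, (g ∘ c) ⁻¹' {g i} = c ⁻¹' {i} := by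
    intro i; ext x
    simp [hg.eq_iff]
  have hsupp : (Function.support fun k => Real.negMulLog (μ ((g ∘ c) ⁻¹' {k})).toReal)
      ⊆ Set.range g := by
    intro k hk
    by_contra hnot
    apply hk
    have hemp : (g ∘ c) ⁻¹' {k} = ∅ := by
      ext x
      simp only [Set.mem_preimage, Function.comp_apply, Set.mem_singleton_iff,
        Set.mem_empty_iff_false, iff_false]
      intro h
      exact hnot ⟨c x, h⟩
    simp [hemp]
  calc colorEntropy μ (g ∘ c)
      = ∑' i : ι, Real.negMulLog (μ ((g ∘ c) ⁻¹' {g i})).toReal := (hg.tsum_eq hsupp).symm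
    _ = colorEntropy μ c := by
        apply tsum_congr; intro i; rw [key i]

lemma colorEntropy_comp_mp {ι : Type*} [Countable ι] {S : M → M}
    (hS : MeasurePreserving S μ μ) {c : M → ι} (hc : ∀ i, MeasurableSet (c ⁻¹' {i})) :
    colorEntropy μ (c ∘ S) = colorEntropy μ c := by
  unfold colorEntropy
  apply tsum_congr
  intro i
  rw [show (c ∘ S) ⁻¹' {i} = S ⁻¹' (c ⁻¹' {i}) from rfl,
    hS.measure_preimage (hc i).nullMeasurableSet]

lemma pm_comp_eq_sum {ι κ : Type*} [Countable ι] [DecidableEq ι] [DecidableEq κ] {c : M → ι}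
    (hc : ∀ i, MeasurableSet (c ⁻¹' {i})) {T : Finset ι} (hT : Set.range c ⊆ ↑T)
    (g : ι → κ) (k : κ) :
    pm μ (g ∘ c) k = ∑ i ∈ T.filter (fun i => g i = k), pm μ c i := by
  have hmeas : MeasurableSet ((g ∘ c) ⁻¹' {k}) := comp_preimage_meas hc g k
  have h1 := toReal_meas_eq_sum (μ := μ) hc hT hmeas
  rw [Finset.sum_filter]
  unfold pm
  rw [h1]
  apply Finset.sum_congr rfl
  intro i _
  by_cases hgi : g i = k
  · rw [if_pos hgi]
    have hset : (g ∘ c) ⁻¹' {k} ∩ c ⁻¹' {i} = c ⁻¹' {i} := by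
      ext x
      simp only [Set.mem_inter_iff, Set.mem_preimage, Function.comp_apply,
        Set.mem_singleton_iff]
      constructor
      · rintro ⟨_, h2⟩; exact h2
      · intro h2; exact ⟨by rw [h2]; exact hgi, h2⟩
    rw [hset]
  · rw [if_neg hgi]
    have : (g ∘ c) ⁻¹' {k} ∩ c ⁻¹' {i} = ∅ := by
      ext x
      simp only [Set.mem_inter_iff, Set.mem_preimage, Function.comp_apply,
        Set.mem_singleton_iff, Set.mem_empty_iff_false, iff_false, not_and]
      intro h1' h2'
      exact hgi (by rw [← h2', h1'])
    rw [this]; simp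

lemma colorEntropy_comp_le {ι κ : Type*} [Countable ι] [Countable κ]
    [DecidableEq ι] [DecidableEq κ] {c : M → ι}
    (hc : ∀ i, MeasurableSet (c ⁻¹' {i})) (hfin : (Set.range c).Finite) (g : ι → κ) :
    colorEntropy μ (g ∘ c) ≤ colorEntropy μ c := by
  classical
  set T := hfin.toFinset with hTdef
  have hT : Set.range c ⊆ ↑T := by simp [hTdef]
  have hT2 : Set.range (g ∘ c) ⊆ ↑(T.image g) := by
    rintro _ ⟨x, rfl⟩
    simp only [Finset.coe_image, Set.mem_image, Finset.mem_coe]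
    exact ⟨c x, by simpa using hT ⟨x, rfl⟩, rfl⟩
  rw [colorEntropy_eq_sum hT2, colorEntropy_eq_sum hT]
  rw [← Finset.sum_fiberwise_of_maps_to (g := g)
    (fun i hi => Finset.mem_image_of_mem g hi) (fun i => Real.negMulLog (pm μ c i))]
  apply Finset.sum_le_sum
  intro j _
  rw [pm_comp_eq_sum hc hT g j]
  exact negMulLog_sum_le _ _ fun i _ => pm_nonneg c i

lemma sum_negMulLog_eq {α : Type*} (T : Finset α) (f : α → ℝ) :
    ∑ i ∈ T, Real.negMulLog (f i) = - ∑ i ∈ T, f i * Real.log (f i) := by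
  rw [← Finset.sum_neg_distrib]
  exact Finset.sum_congr rfl fun i _ => by rw [Real.negMulLog]; ring

/-- Strong subadditivity instance: conditioning on a finer partition decreases
conditional entropy. `H(u ∨ e) + H(g∘e) ≤ H(u ∨ g∘e) + H(e)`. -/
lemma gibbs_main {ι κ ν : Type*} [Countable ι] [Countable κ] [Countable ν]
    [DecidableEq ι] [DecidableEq κ] [DecidableEq ν]
    {u : M → ι} {e : M → κ}
    (hu : ∀ i, MeasurableSet (u ⁻¹' {i})) (he : ∀ k, MeasurableSet (e ⁻¹' {k}))
    (hufin : (Set.range u).Finite) (hefin : (Set.range e).Finite) (g : κ → ν) :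
    colorEntropy μ (pair u e) + colorEntropy μ (g ∘ e)
      ≤ colorEntropy μ (pair u (g ∘ e)) + colorEntropy μ e := by
  classical
  set Tu := hufin.toFinset with hTudef
  set Te := hefin.toFinset with hTedef
  have hTu : Set.range u ⊆ ↑Tu := by simp [hTudef]
  have hTe : Set.range e ⊆ ↑Te := by simp [hTedef]
  set Tj := Te.image g with hTjdef
  have hTj : Set.range (g ∘ e) ⊆ ↑Tj := by
    rintro _ ⟨x, rfl⟩
    simp only [hTjdef, Finset.coe_image, Set.mem_image, Finset.mem_coe]
    exact ⟨e x, by simpa using hTe ⟨x, rfl⟩, rfl⟩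
  have hmapsto : ∀ k ∈ Te, g k ∈ Tj := fun k hk => Finset.mem_image_of_mem g hk
  have hrangepair : Set.range (pair u e) ⊆ ↑(Tu ×ˢ Te) := by
    rintro _ ⟨x, rfl⟩
    simp only [Finset.coe_product, Set.mem_prod]
    exact ⟨hTu ⟨x, rfl⟩, hTe ⟨x, rfl⟩⟩
  have hrangepair2 : Set.range (pair u (g ∘ e)) ⊆ ↑(Tu ×ˢ Tj) := by
    rintro _ ⟨x, rfl⟩
    simp only [Finset.coe_product, Set.mem_prod]
    exact ⟨hTu ⟨x, rfl⟩, hTj ⟨x, rfl⟩⟩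
  have hge : ∀ k, MeasurableSet ((g ∘ e) ⁻¹' {k}) := comp_preimage_meas he g
  -- monotonicity facts
  have ha_le_p : ∀ z : ι × κ, pm μ (pair u e) z ≤ pm μ e z.2 := by
    rintro ⟨i, k⟩
    apply toReal_mono_meas
    rw [pair_preimage]
    exact Set.inter_subset_right
  have ha_le_Q : ∀ z : ι × κ, pm μ (pair u e) z ≤ pm μ (pair u (g ∘ e)) (z.1, g z.2) := by
    rintro ⟨i, k⟩
    apply toReal_mono_meas
    rw [pair_preimage, pair_preimage]
    rintro x ⟨h1, h2⟩
    refine ⟨h1, ?_⟩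
    simp only [Set.mem_preimage, Set.mem_singleton_iff] at h2 ⊢
    simp [h2]
  have hp_le_P : ∀ k, pm μ e k ≤ pm μ (g ∘ e) (g k) := by
    intro k
    apply toReal_mono_meas
    intro x hx
    simp only [Set.mem_preimage, Set.mem_singleton_iff] at hx ⊢
    simp [hx]
  -- marginals
  have m1 : ∀ k, pm μ e k = ∑ i ∈ Tu, pm μ (pair u e) (i, k) := by
    intro k
    have h := toReal_meas_eq_sum (μ := μ) hu hTu (he k)
    unfold pm
    rw [h]
    apply Finset.sum_congr rfl
    intro i _
    rw [pair_preimage, Set.inter_comm]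
  have m1Q : ∀ j, pm μ (g ∘ e) j = ∑ i ∈ Tu, pm μ (pair u (g ∘ e)) (i, j) := by
    intro j
    have h := toReal_meas_eq_sum (μ := μ) hu hTu (hge j)
    unfold pm
    rw [h]
    apply Finset.sum_congr rfl
    intro i _
    rw [pair_preimage, Set.inter_comm]
  have mP : ∀ j, pm μ (g ∘ e) j = ∑ k ∈ Te.filter (fun k => g k = j), pm μ e k :=
    fun j => pm_comp_eq_sum he hTe g j
  have mQ : ∀ i j, pm μ (pair u (g ∘ e)) (i, j)
      = ∑ k ∈ Te.filter (fun k => g k = j), pm μ (pair u e) (i, k) := by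
    intro i j
    have h := toReal_meas_eq_sum (μ := μ) he hTe (pair_meas hu hge (i, j))
    unfold pm
    rw [h, Finset.sum_filter]
    apply Finset.sum_congr rfl
    intro k _
    by_cases hgk : g k = j
    · rw [if_pos hgk]
      have hseteq : pair u (g ∘ e) ⁻¹' {(i, j)} ∩ e ⁻¹' {k} = pair u e ⁻¹' {(i, k)} := by
        rw [pair_preimage, pair_preimage]
        ext x
        simp only [Set.mem_inter_iff, Set.mem_preimage, Set.mem_singleton_iff,
          Function.comp_apply]
        constructor
        · rintro ⟨⟨h1, _⟩, h3⟩; exact ⟨h1, h3⟩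
        · rintro ⟨h1, h2⟩; exact ⟨⟨h1, by rw [h2]; exact hgk⟩, h2⟩
      rw [hseteq]
    · rw [if_neg hgk]
      have : pair u (g ∘ e) ⁻¹' {(i, j)} ∩ e ⁻¹' {k} = ∅ := by
        rw [pair_preimage]
        ext x
        simp only [Set.mem_inter_iff, Set.mem_preimage, Set.mem_singleton_iff,
          Function.comp_apply, Set.mem_empty_iff_false, iff_false, not_and]
        rintro ⟨_, h2⟩ h3
        exact hgk (by rw [← h3]; exact h2)
      rw [this]; simp
  have sum_a : ∑ z ∈ Tu ×ˢ Te, pm μ (pair u e) z = 1 :=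
    sum_pm_eq_one (pair_meas hu he) hrangepair
  have sum_p : ∑ k ∈ Te, pm μ e k = 1 := sum_pm_eq_one he hTe
  -- the comparison weights
  set b : ι × κ → ℝ :=
    fun z => pm μ e z.2 / pm μ (g ∘ e) (g z.2) * pm μ (pair u (g ∘ e)) (z.1, g z.2)
    with hbdef
  have hb_nonneg : ∀ z, 0 ≤ b z := by
    intro z
    exact mul_nonneg (div_nonneg (pm_nonneg _ _) (pm_nonneg _ _)) (pm_nonneg _ _)
  have hab : ∀ z : ι × κ, b z = 0 → pm μ (pair u e) z = 0 := by
    intro z hz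
    rcases mul_eq_zero.mp hz with h | h
    · rcases div_eq_zero_iff.mp h with h' | h'
      · exact le_antisymm (h' ▸ ha_le_p z) (pm_nonneg _ _)
      · have hp0 : pm μ e z.2 = 0 := le_antisymm (h' ▸ hp_le_P z.2) (pm_nonneg _ _)
        exact le_antisymm (hp0 ▸ ha_le_p z) (pm_nonneg _ _)
    · exact le_antisymm (h ▸ ha_le_Q z) (pm_nonneg _ _)
  have sum_b : ∑ z ∈ Tu ×ˢ Te, b z = 1 := by
    rw [Finset.sum_product_right]
    have hinner : ∀ k ∈ Te, (∑ i ∈ Tu, b (i, k)) = pm μ e k := by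
      intro k _
      have : ∑ i ∈ Tu, b (i, k)
          = pm μ e k / pm μ (g ∘ e) (g k) * ∑ i ∈ Tu, pm μ (pair u (g ∘ e)) (i, g k) := by
        rw [Finset.mul_sum]
      rw [this, ← m1Q (g k)]
      by_cases hP : pm μ (g ∘ e) (g k) = 0
      · have hp0 : pm μ e k = 0 := le_antisymm (hP ▸ hp_le_P k) (pm_nonneg _ _)
        rw [hp0, hP]; simp
      · field_simp
    rw [Finset.sum_congr rfl hinner, sum_p]
  have key := gibbs_sum (Tu ×ˢ Te) (pm μ (pair u e)) b
    (fun z _ => pm_nonneg _ _) (fun z _ => hb_nonneg z) (fun z _ => hab z)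
  rw [sum_a, sum_b, sub_self] at key
  -- decompose the cross term
  have S1 : ∑ z ∈ Tu ×ˢ Te, pm μ (pair u e) z * Real.log (b z)
      = ∑ z ∈ Tu ×ˢ Te, (pm μ (pair u e) z * Real.log (pm μ e z.2)
          + pm μ (pair u e) z * Real.log (pm μ (pair u (g ∘ e)) (z.1, g z.2))
          - pm μ (pair u e) z * Real.log (pm μ (g ∘ e) (g z.2))) := by
    apply Finset.sum_congr rfl
    intro z _
    by_cases haz : pm μ (pair u e) z = 0
    · simp [haz]
    · have ha_pos : 0 < pm μ (pair u e) z := lt_of_le_of_ne (pm_nonneg _ _) (Ne.symm haz)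
      have hp_pos : 0 < pm μ e z.2 := lt_of_lt_of_le ha_pos (ha_le_p z)
      have hQ_pos : 0 < pm μ (pair u (g ∘ e)) (z.1, g z.2) :=
        lt_of_lt_of_le ha_pos (ha_le_Q z)
      have hP_pos : 0 < pm μ (g ∘ e) (g z.2) := lt_of_lt_of_le hp_pos (hp_le_P z.2)
      rw [hbdef]
      rw [Real.log_mul (div_ne_zero hp_pos.ne' hP_pos.ne') hQ_pos.ne',
        Real.log_div hp_pos.ne' hP_pos.ne']
      ring
  have S2 : ∑ z ∈ Tu ×ˢ Te, pm μ (pair u e) z * Real.log (pm μ e z.2)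
      = ∑ k ∈ Te, pm μ e k * Real.log (pm μ e k) := by
    rw [Finset.sum_product_right]
    dsimp only
    apply Finset.sum_congr rfl
    intro k _
    rw [← Finset.sum_mul, ← m1 k]
  have S3 : ∑ z ∈ Tu ×ˢ Te, pm μ (pair u e) z * Real.log (pm μ (g ∘ e) (g z.2))
      = ∑ j ∈ Tj, pm μ (g ∘ e) j * Real.log (pm μ (g ∘ e) j) := by
    rw [Finset.sum_product_right]
    dsimp only
    have step1 : ∀ k ∈ Te, (∑ i ∈ Tu, pm μ (pair u e) (i, k) * Real.log (pm μ (g ∘ e) (g k)))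
        = pm μ e k * Real.log (pm μ (g ∘ e) (g k)) := by
      intro k _
      rw [← Finset.sum_mul, ← m1 k]
    rw [Finset.sum_congr rfl step1]
    rw [← Finset.sum_fiberwise_of_maps_to hmapsto
      (fun k => pm μ e k * Real.log (pm μ (g ∘ e) (g k)))]
    apply Finset.sum_congr rfl
    intro j _
    have step2 : ∀ k ∈ Te.filter (fun k => g k = j),
        pm μ e k * Real.log (pm μ (g ∘ e) (g k)) = pm μ e k * Real.log (pm μ (g ∘ e) j) := by
      intro k hk
      rw [(Finset.mem_filter.mp hk).2]
    rw [Finset.sum_congr rfl step2, ← Finset.sum_mul, ← mP j]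
  have S4 : ∑ z ∈ Tu ×ˢ Te, pm μ (pair u e) z * Real.log (pm μ (pair u (g ∘ e)) (z.1, g z.2))
      = ∑ w ∈ Tu ×ˢ Tj, pm μ (pair u (g ∘ e)) w * Real.log (pm μ (pair u (g ∘ e)) w) := by
    rw [Finset.sum_product, Finset.sum_product]
    dsimp only
    apply Finset.sum_congr rfl
    intro i _
    rw [← Finset.sum_fiberwise_of_maps_to hmapsto
      (fun k => pm μ (pair u e) (i, k) * Real.log (pm μ (pair u (g ∘ e)) (i, g k)))]
    apply Finset.sum_congr rfl
    intro j _
    have step2 : ∀ k ∈ Te.filter (fun k => g k = j),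
        pm μ (pair u e) (i, k) * Real.log (pm μ (pair u (g ∘ e)) (i, g k))
          = pm μ (pair u e) (i, k) * Real.log (pm μ (pair u (g ∘ e)) (i, j)) := by
      intro k hk
      rw [(Finset.mem_filter.mp hk).2]
    rw [Finset.sum_congr rfl step2, ← Finset.sum_mul, ← mQ i j]
  rw [S1] at key
  rw [Finset.sum_sub_distrib, Finset.sum_add_distrib, S2, S3, S4] at key
  -- entropies as finite sums
  have Hpair : colorEntropy μ (pair u e)
      = - ∑ z ∈ Tu ×ˢ Te, pm μ (pair u e) z * Real.log (pm μ (pair u e) z) := by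
    rw [colorEntropy_eq_sum hrangepair, sum_negMulLog_eq]
  have He : colorEntropy μ e = - ∑ k ∈ Te, pm μ e k * Real.log (pm μ e k) := by
    rw [colorEntropy_eq_sum hTe, sum_negMulLog_eq]
  have HP : colorEntropy μ (g ∘ e) = - ∑ j ∈ Tj, pm μ (g ∘ e) j * Real.log (pm μ (g ∘ e) j) := by
    rw [colorEntropy_eq_sum hTj, sum_negMulLog_eq]
  have HQ : colorEntropy μ (pair u (g ∘ e))
      = - ∑ w ∈ Tu ×ˢ Tj, pm μ (pair u (g ∘ e)) w * Real.log (pm μ (pair u (g ∘ e)) w) := by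
    rw [colorEntropy_eq_sum hrangepair2, sum_negMulLog_eq]
  rw [Hpair, He, HP, HQ]
  linarith [key]

lemma colorEntropy_const {ν : Type*} [Countable ν] (z : ν) :
    colorEntropy μ (fun _ : M => z) = 0 := by
  unfold colorEntropy
  rw [tsum_eq_single z]
  · have h1 : (fun _ : M => z) ⁻¹' {z} = Set.univ := by ext x; simp
    rw [h1]; simp
  · intro b hb
    have h2 : (fun _ : M => z) ⁻¹' {b} = ∅ := by
      ext x; simp [Ne.symm hb]
    rw [h2]; simp

lemma colorEntropy_pair_le {ι κ : Type*} [Countable ι] [Countable κ]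
    [DecidableEq ι] [DecidableEq κ] {c : M → ι} {d : M → κ}
    (hc : ∀ i, MeasurableSet (c ⁻¹' {i})) (hd : ∀ j, MeasurableSet (d ⁻¹' {j}))
    (hcf : (Set.range c).Finite) (hdf : (Set.range d).Finite) :
    colorEntropy μ (pair c d) ≤ colorEntropy μ c + colorEntropy μ d := by
  have h := gibbs_main (μ := μ) hc hd hcf hdf (fun _ => (0 : ℕ))
  have h1 : ((fun _ : κ => (0:ℕ)) ∘ d) = (fun _ : M => (0:ℕ)) := rfl
  rw [h1] at h
  have h2 : colorEntropy μ (fun _ : M => (0:ℕ)) = 0 := colorEntropy_const 0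
  have h3 : colorEntropy μ (pair c (fun _ : M => (0:ℕ))) = colorEntropy μ c := by
    have heq : pair c (fun _ : M => (0:ℕ)) = (fun i => (i, (0:ℕ))) ∘ c := rfl
    rw [heq]
    exact colorEntropy_comp_inj c fun a b hab => (Prod.ext_iff.mp hab).1
  rw [h2, h3] at h
  linarith

lemma colorEntropy_le_pair {ι κ : Type*} [Countable ι] [Countable κ]
    [DecidableEq ι] [DecidableEq κ] {c : M → ι} {d : M → κ}
    (hc : ∀ i, MeasurableSet (c ⁻¹' {i})) (hd : ∀ j, MeasurableSet (d ⁻¹' {j}))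
    (hcf : (Set.range c).Finite) (hdf : (Set.range d).Finite) :
    colorEntropy μ c ≤ colorEntropy μ (pair c d) := by
  have h := colorEntropy_comp_le (μ := μ) (pair_meas hc hd) (pair_finrange hcf hdf)
    (Prod.fst : ι × κ → ι)
  have he : (Prod.fst : ι × κ → ι) ∘ pair c d = c := rfl
  rwa [he] at h

lemma colorEntropy_cond_triple {ι ι' κ : Type*} [Countable ι] [Countable ι'] [Countable κ]
    [DecidableEq ι] [DecidableEq ι'] [DecidableEq κ]
    {A : M → ι} {B : M → ι'} {v : M → κ}
    (hA : ∀ i, MeasurableSet (A ⁻¹' {i})) (hB : ∀ i, MeasurableSet (B ⁻¹' {i}))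
    (hv : ∀ k, MeasurableSet (v ⁻¹' {k}))
    (hAf : (Set.range A).Finite) (hBf : (Set.range B).Finite)
    (hvf : (Set.range v).Finite) :
    colorEntropy μ (pair (pair A B) v) + colorEntropy μ v
      ≤ colorEntropy μ (pair A v) + colorEntropy μ (pair B v) := by
  have h := gibbs_main (μ := μ) hB (pair_meas hA hv) hBf (pair_finrange hAf hvf)
    (Prod.snd : ι × κ → κ)
  have e1 : (Prod.snd : ι × κ → κ) ∘ pair A v = v := rfl
  rw [e1] at h
  have e2 : colorEntropy μ (pair B (pair A v)) = colorEntropy μ (pair (pair A B) v) := by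
    have hσ : Function.Injective
        (fun w : (ι × ι') × κ => (w.1.2, (w.1.1, w.2)) : (ι × ι') × κ → ι' × (ι × κ)) := by
      rintro ⟨⟨a, b⟩, k⟩ ⟨⟨a', b'⟩, k'⟩ hw
      simp only [Prod.mk.injEq] at hw ⊢
      exact ⟨⟨hw.2.1, hw.1⟩, hw.2.2⟩
    have heq : (fun w : (ι × ι') × κ => (w.1.2, (w.1.1, w.2))) ∘ pair (pair A B) v
        = pair B (pair A v) := rfl
    rw [← heq, colorEntropy_comp_inj _ hσ]
  rw [e2] at h
  linarith

lemma big_meas {n : ℕ} (u : Fin n → M → ℕ) (hu : ∀ i j, MeasurableSet (u i ⁻¹' {j})) :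
    ∀ f : Fin n → ℕ, MeasurableSet ((fun x (i : Fin n) => u i x) ⁻¹' {f}) := by
  intro f
  have h : (fun x (i : Fin n) => u i x) ⁻¹' {f} = ⋂ i : Fin n, u i ⁻¹' {f i} := by
    ext x
    simp [funext_iff]
  rw [h]
  exact MeasurableSet.iInter fun i => hu i (f i)

lemma big_fin {n : ℕ} (u : Fin n → M → ℕ) (huf : ∀ i, (Set.range (u i)).Finite) :
    (Set.range fun x (i : Fin n) => u i x).Finite := by
  apply (Set.Finite.pi (t := fun i => Set.range (u i)) huf).subset
  rintro _ ⟨x, rfl⟩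
  exact fun i _ => ⟨x, rfl⟩

lemma colorEntropy_chain {κ : Type*} [Countable κ] [DecidableEq κ] :
    ∀ (n : ℕ) (u : Fin n → M → ℕ), (∀ i j, MeasurableSet (u i ⁻¹' {j})) →
    (∀ i, (Set.range (u i)).Finite) →
    ∀ (v : M → κ), (∀ k, MeasurableSet (v ⁻¹' {k})) → (Set.range v).Finite →
    colorEntropy μ (pair (fun x (i : Fin n) => u i x) v)
      ≤ colorEntropy μ v
        + ∑ i : Fin n, (colorEntropy μ (pair (u i) v) - colorEntropy μ v) := by
  intro n
  induction n with
  | zero =>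
    intro u hu huf v hv hvf
    have heq : pair (fun x (i : Fin 0) => u i x) v
        = (fun k => ((fun i : Fin 0 => i.elim0), k)) ∘ v := by
      funext x
      simp only [pair, Function.comp_apply]
      congr 1
      exact funext fun i => i.elim0
    have hinj : Function.Injective (fun k : κ => ((fun i : Fin 0 => i.elim0 (α := ℕ)), k)) :=
      fun a b hab => (Prod.ext_iff.mp hab).2
    rw [heq, colorEntropy_comp_inj v hinj]
    simp
  | succ n ih =>
    intro u hu huf v hv hvf
    set front : Fin n → M → ℕ := fun i => u i.castSucc with hfrontdef
    have hrec : pair (fun x (i : Fin (n+1)) => u i x) v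
        = (fun w : ((Fin n → ℕ) × ℕ) × κ => ((Fin.snoc w.1.1 w.1.2 : Fin (n+1) → ℕ), w.2))
            ∘ pair (pair (fun x (i : Fin n) => front i x) (u (Fin.last n))) v := by
      funext x
      simp only [pair, Function.comp_apply]
      refine Prod.ext ?_ rfl
      · show (fun i : Fin (n+1) => u i x) = Fin.snoc (fun i : Fin n => front i x) (u (Fin.last n) x)
        funext i
        induction i using Fin.lastCases with
        | last => rw [Fin.snoc_last]
        | cast j => rw [Fin.snoc_castSucc]
    have hinj : Function.Injective
        (fun w : ((Fin n → ℕ) × ℕ) × κ => ((Fin.snoc w.1.1 w.1.2 : Fin (n+1) → ℕ), w.2)) := by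
      rintro ⟨⟨f, a⟩, k⟩ ⟨⟨f', a'⟩, k'⟩ hw
      simp only [Prod.mk.injEq] at hw ⊢
      obtain ⟨h1, h2⟩ := hw
      refine ⟨⟨?_, ?_⟩, h2⟩
      · funext j
        have := congrFun h1 j.castSucc
        rwa [Fin.snoc_castSucc, Fin.snoc_castSucc] at this
      · have := congrFun h1 (Fin.last n)
        rwa [Fin.snoc_last, Fin.snoc_last] at this
    rw [hrec, colorEntropy_comp_inj _ hinj]
    have hfm : ∀ f, MeasurableSet ((fun x (i : Fin n) => front i x) ⁻¹' {f}) :=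
      big_meas front (fun i j => hu i.castSucc j)
    have hff : (Set.range fun x (i : Fin n) => front i x).Finite :=
      big_fin front (fun i => huf i.castSucc)
    have htriple := colorEntropy_cond_triple (μ := μ) hfm (hu (Fin.last n)) hv hff
      (huf (Fin.last n)) hvf
    have hih := ih front (fun i j => hu i.castSucc j) (fun i => huf i.castSucc) v hv hvf
    rw [Fin.sum_univ_castSucc]
    have : ∑ i : Fin n, (colorEntropy μ (pair (u i.castSucc) v) - colorEntropy μ v)
        = ∑ i : Fin n, (colorEntropy μ (pair (front i) v) - colorEntropy μ v) := rfl
    rw [this]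
    linarith

def jointC (T : M → M) (c : M → ℕ) (n : ℕ) : M → (Fin n → ℕ) := fun x i => c (T^[(i : ℕ)] x)

noncomputable def aent (μ : Measure M) (T : M → M) (c : M → ℕ) (n : ℕ) : ℝ :=
  colorEntropy μ (jointC T c n)

noncomputable def hent (μ : Measure M) (T : M → M) (c : M → ℕ) : ℝ :=
  Filter.liminf (fun n : ℕ => aent μ T c n / n) Filter.atTop

lemma metricEntropy_eq (T : M → M) :
    metricEntropy T μ
      = ⨆ c : {c : M → ℕ // Measurable c ∧ (Set.range c).Finite}, hent μ T c.1 := rfl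

lemma jointC_meas {T : M → M} (hT : Measurable T) {c : M → ℕ} (hc : Measurable c) (n : ℕ) :
    ∀ f, MeasurableSet (jointC T c n ⁻¹' {f}) := by
  intro f
  have h : jointC T c n ⁻¹' {f} = ⋂ i : Fin n, T^[(i : ℕ)] ⁻¹' (c ⁻¹' {f i}) := by
    ext x; simp [jointC, funext_iff]
  rw [h]
  exact MeasurableSet.iInter fun i => hT.iterate (i : ℕ) (hc (measurableSet_singleton (f i)))

lemma jointC_fin {T : M → M} {c : M → ℕ} (hfin : (Set.range c).Finite) (n : ℕ) :
    (Set.range (jointC T c n)).Finite := by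
  apply (Set.Finite.pi (t := fun _ : Fin n => Set.range c) fun _ => hfin).subset
  rintro _ ⟨x, rfl⟩
  exact fun i _ => ⟨T^[(i : ℕ)] x, rfl⟩

lemma append_inj {m n : ℕ} : Function.Injective
    (fun p : (Fin m → ℕ) × (Fin n → ℕ) => Fin.append p.1 p.2) := by
  rintro ⟨a, b⟩ ⟨a', b'⟩ h
  simp only [Prod.mk.injEq]
  constructor
  · funext i
    have h2 := congrFun h (Fin.castAdd n i)
    simpa [Fin.append_left] using h2
  · funext j
    have h2 := congrFun h (Fin.natAdd m j)
    simpa [Fin.append_right] using h2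

lemma jointC_add (T : M → M) (c : M → ℕ) (m n : ℕ) :
    jointC T c (m + n)
      = (fun p : (Fin m → ℕ) × (Fin n → ℕ) => Fin.append p.1 p.2)
          ∘ pair (jointC T c m) (jointC T c n ∘ T^[m]) := by
  funext x
  show (fun i : Fin (m + n) => c (T^[(i : ℕ)] x))
      = Fin.append (jointC T c m x) (jointC T c n (T^[m] x))
  funext i
  induction i using Fin.addCases with
  | left i =>
    rw [Fin.append_left]
    show c (T^[((Fin.castAdd n i : Fin (m + n)) : ℕ)] x) = c (T^[(i : ℕ)] x)
    rw [Fin.coe_castAdd]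
  | right j =>
    rw [Fin.append_right]
    show c (T^[((Fin.natAdd m j : Fin (m + n)) : ℕ)] x) = c (T^[(j : ℕ)] (T^[m] x))
    rw [Fin.coe_natAdd, add_comm m (j : ℕ), Function.iterate_add_apply]

lemma aent_subadd {T : M → M} (hT : Measurable T) (hmpT : MeasurePreserving T μ μ)
    {c : M → ℕ} (hc : Measurable c) (hfin : (Set.range c).Finite) :
    Subadditive (aent μ T c) := by
  intro m n
  have h1 : aent μ T c (m + n)
      = colorEntropy μ (pair (jointC T c m) (jointC T c n ∘ T^[m])) := by
    rw [aent, jointC_add T c m n, colorEntropy_comp_inj _ append_inj]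
  rw [h1]
  have hJm := jointC_meas hT hc m
  have hJn := jointC_meas hT hc n
  have hcomp_meas : ∀ f, MeasurableSet ((jointC T c n ∘ T^[m]) ⁻¹' {f}) :=
    fun f => hT.iterate m (hJn f)
  have hcomp_fin : (Set.range (jointC T c n ∘ T^[m])).Finite :=
    (jointC_fin hfin n).subset (Set.range_comp_subset_range _ _)
  calc colorEntropy μ (pair (jointC T c m) (jointC T c n ∘ T^[m]))
      ≤ colorEntropy μ (jointC T c m) + colorEntropy μ (jointC T c n ∘ T^[m]) :=
        colorEntropy_pair_le hJm hcomp_meas (jointC_fin hfin m) hcomp_fin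
    _ = aent μ T c m + aent μ T c n := by
        rw [colorEntropy_comp_mp (hmpT.iterate m) hJn]; rfl

lemma hent_tendsto {T : M → M} (hT : Measurable T) (hmpT : MeasurePreserving T μ μ)
    {c : M → ℕ} (hc : Measurable c) (hfin : (Set.range c).Finite) :
    Tendsto (fun n : ℕ => aent μ T c n / n) atTop (𝓝 (hent μ T c)) := by
  have hsub := aent_subadd hT hmpT hc hfin
  have hbdd : BddBelow (Set.range fun n : ℕ => aent μ T c n / n) := by
    refine ⟨0, ?_⟩
    rintro _ ⟨n, rfl⟩
    exact div_nonneg (colorEntropy_nonneg _) (Nat.cast_nonneg n)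
  have ht := hsub.tendsto_lim hbdd
  have h2 : hent μ T c = hsub.lim := ht.liminf_eq
  rw [h2]; exact ht

lemma flow_measurable {φ : ℝ → M → M} (hφm : Measurable fun p : ℝ × M => φ p.1 p.2) (u : ℝ) :
    Measurable (φ u) := by
  have h : (φ u) = (fun p : ℝ × M => φ p.1 p.2) ∘ (fun x => (u, x)) := rfl
  rw [h]
  exact hφm.comp (measurable_const.prodMk measurable_id)

lemma flow_iterate {φ : ℝ → M → M} (hφ0 : φ 0 = id) (hφadd : ∀ s t, φ (s + t) = φ s ∘ φ t)
    (u : ℝ) (k : ℕ) : (φ u)^[k] = φ ((k : ℝ) * u) := by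
  induction k with
  | zero => simp [hφ0]
  | succ k ih =>
    rw [Function.iterate_succ', ih, ← hφadd u ((k : ℝ) * u)]
    congr 1
    push_cast
    ring

lemma aent_inv {φ : ℝ → M → M} (hφ0 : φ 0 = id) (hφadd : ∀ s t, φ (s + t) = φ s ∘ φ t)
    (hφm : Measurable fun p : ℝ × M => φ p.1 p.2)
    (hmp : ∀ t, MeasurePreserving (φ t) μ μ)
    {c : M → ℕ} (hc : Measurable c) (u : ℝ) (n : ℕ) :
    aent μ (φ (-u)) c n = aent μ (φ u) c n := by
  have hrev_inj : Function.Injective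
      (fun f : Fin n → ℕ => (fun i => f i.rev : Fin n → ℕ)) := by
    intro f g h
    funext i
    have h2 := congrFun h i.rev
    simpa [Fin.rev_rev] using h2
  have hkey : jointC (φ (-u)) c n
      = ((fun f : Fin n → ℕ => (fun i => f i.rev : Fin n → ℕ)) ∘ jointC (φ u) c n)
          ∘ (φ (-(((n : ℝ) - 1) * u))) := by
    funext x
    funext i
    show c ((φ (-u))^[(i : ℕ)] x) = c ((φ u)^[((i.rev : Fin n) : ℕ)] (φ (-(((n : ℝ) - 1) * u)) x))
    rw [flow_iterate hφ0 hφadd, flow_iterate hφ0 hφadd]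
    have hcomp := congrFun (hφadd (((i.rev : Fin n) : ℕ) * u) (-(((n : ℝ) - 1) * u))) x
    rw [Function.comp_apply] at hcomp
    rw [← hcomp]
    congr 1
    have hval : (((i.rev : Fin n) : ℕ) : ℝ) = (n : ℝ) - ((i : ℕ) + 1) := by
      rw [Fin.val_rev]
      have hi : (i : ℕ) + 1 ≤ n := i.isLt
      push_cast [Nat.cast_sub hi]
      ring
    rw [hval]
    ring
  have hrevmeas : ∀ f, MeasurableSet
      ((((fun f : Fin n → ℕ => (fun i => f i.rev : Fin n → ℕ)) ∘ jointC (φ u) c n)) ⁻¹' {f}) := by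
    intro f
    have h : ((fun f : Fin n → ℕ => (fun i => f i.rev : Fin n → ℕ)) ∘ jointC (φ u) c n) ⁻¹' {f}
        = jointC (φ u) c n ⁻¹' {fun i => f i.rev} := by
      ext x
      simp only [Set.mem_preimage, Function.comp_apply, Set.mem_singleton_iff, funext_iff]
      constructor <;> intro h i <;>
        · have h2 := h i.rev
          simpa [Fin.rev_rev] using h2
    rw [h]
    exact jointC_meas (flow_measurable hφm u) hc n _
  rw [aent, hkey, colorEntropy_comp_mp (hmp _) hrevmeas, colorEntropy_comp_inj _ hrev_inj]
  rfl

lemma hent_inv {φ : ℝ → M → M} (hφ0 : φ 0 = id) (hφadd : ∀ s t, φ (s + t) = φ s ∘ φ t)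
    (hφm : Measurable fun p : ℝ × M => φ p.1 p.2)
    (hmp : ∀ t, MeasurePreserving (φ t) μ μ)
    {c : M → ℕ} (hc : Measurable c) (u : ℝ) :
    hent μ (φ (-u)) c = hent μ (φ u) c := by
  unfold hent
  congr 1
  funext n
  rw [aent_inv hφ0 hφadd hφm hmp hc u n]

lemma hent_id {c : M → ℕ} (hc : Measurable c) : hent μ (id : M → M) c = 0 := by
  have hev : ∀ n : ℕ, 1 ≤ n → aent μ (id : M → M) c n = colorEntropy μ c := by
    intro n hn
    have heq : jointC (id : M → M) c n = (fun v (_ : Fin n) => v) ∘ c := by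
      funext x i; simp [jointC]
    have hinj : Function.Injective (fun v : ℕ => (fun _ : Fin n => v)) := by
      intro a b h
      exact congrFun h ⟨0, hn⟩
    rw [aent, heq, colorEntropy_comp_inj c hinj]
  have ht : Tendsto (fun n : ℕ => aent μ (id : M → M) c n / n) atTop (𝓝 0) := by
    apply (tendsto_const_div_atTop_nhds_zero_nat (colorEntropy μ c)).congr'
    filter_upwards [eventually_ge_atTop 1] with n hn
    rw [hev n hn]
  exact ht.liminf_eq

open scoped symmDiff in
lemma translation_cont {S : Set ℝ} (hS : MeasurableSet S) (hfin : volume S ≠ ⊤) :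
    Tendsto (fun u : ℝ => (volume (((fun s : ℝ => s + u) ⁻¹' S) ∆ S)).toReal)
      (𝓝 0) (𝓝 0) := by
  set F : C(ℝ × ℝ, ℝ) := ⟨fun p => p.2 + p.1, by fun_prop⟩ with hF
  set f : ℝ → C(ℝ, ℝ) := fun u => (ContinuousMap.curry F) u with hf
  have hcont : Continuous f := (ContinuousMap.curry F).continuous
  have htends : Tendsto f (𝓝 0) (𝓝 (f 0)) := hcont.tendsto 0
  have hmpf : ∀ u : ℝ, MeasurePreserving (f u) volume volume := by
    intro u
    have h : (f u : ℝ → ℝ) = fun s => s + u := rfl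
    rw [h]
    exact measurePreserving_add_right volume u
  have hmain := tendsto_measure_symmDiff_preimage_nhds_zero htends
    (Eventually.of_forall hmpf) (hmpf 0) hS.nullMeasurableSet hfin
  have hpre0 : (f 0 : ℝ → ℝ) ⁻¹' S = S := by
    have h : (f 0 : ℝ → ℝ) = fun s => s + 0 := rfl
    rw [h]; simp
  rw [hpre0] at hmain
  have htoReal : Tendsto ENNReal.toReal (𝓝 0) (𝓝 0) := by
    have h := ENNReal.tendsto_toReal (a := 0) (by simp)
    simpa using h
  exact (htoReal.comp hmain).congr fun u => rfl

open scoped symmDiff in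
lemma flow_cont {φ : ℝ → M → M} (hφ0 : φ 0 = id) (hφadd : ∀ s t, φ (s + t) = φ s ∘ φ t)
    (hφm : Measurable fun p : ℝ × M => φ p.1 p.2)
    (hmp : ∀ t, MeasurePreserving (φ t) μ μ)
    {A : Set M} (hA : MeasurableSet A) :
    Tendsto (fun u : ℝ => (μ ((φ u ⁻¹' A) ∆ A)).toReal) (𝓝 0) (𝓝 0) := by
  classical
  set f : M → ℝ := A.indicator 1 with hfdef
  have hfmeas : Measurable f := measurable_const.indicator hA
  set Ψ : ℝ × M → ℝ := fun p => f (φ p.1 p.2) with hΨdef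
  have hΨmeas : Measurable Ψ := hfmeas.comp hφm
  have hf01 : ∀ y, f y = 0 ∨ f y = 1 := by
    intro y; by_cases hy : y ∈ A <;> simp [hfdef, Set.indicator_apply, hy]
  have habs_le : ∀ y z : M, |f y - f z| ≤ 1 := by
    intro y z
    rcases hf01 y with h1 | h1 <;> rcases hf01 z with h2 | h2 <;> rw [h1, h2] <;> norm_num
  have step0 : ∀ u : ℝ, (μ ((φ u ⁻¹' A) ∆ A)).toReal = ∫ x, |f (φ u x) - f x| ∂μ := by
    intro u
    have hseteq : ∀ x, |f (φ u x) - f x| = ((φ u ⁻¹' A) ∆ A).indicator 1 x := by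
      intro x
      by_cases h1 : φ u x ∈ A <;> by_cases h2 : x ∈ A <;>
        · simp only [hfdef, Set.indicator_apply, Set.mem_symmDiff, Set.mem_preimage, h1, h2]
          norm_num
    rw [show (∫ x, |f (φ u x) - f x| ∂μ) = ∫ x, ((φ u ⁻¹' A) ∆ A).indicator 1 x ∂μ from
      integral_congr_ae (Eventually.of_forall hseteq)]
    rw [integral_indicator_one ((flow_measurable hφm u hA).symmDiff hA)]; rfl
  have hG : ∀ u s : ℝ, (∫ x, |Ψ (s + u, x) - Ψ (s, x)| ∂μ) = ∫ x, |f (φ u x) - f x| ∂μ := by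
    intro u s
    have hcomp : ∀ x, |Ψ (s + u, x) - Ψ (s, x)| = |f (φ u (φ s x)) - f (φ s x)| := by
      intro x
      have h1 : φ (s + u) x = φ u (φ s x) := by
        rw [show s + u = u + s from add_comm s u, hφadd u s]; rfl
      simp only [hΨdef]
      rw [h1]
    rw [integral_congr_ae (Eventually.of_forall hcomp)]
    have hGmeas : Measurable fun y => |f (φ u y) - f y| :=
      ((hfmeas.comp (flow_measurable hφm u)).sub hfmeas).abs
    conv_rhs => rw [← (hmp s).map_eq]
    rw [integral_map (flow_measurable hφm s).aemeasurable hGmeas.aestronglyMeasurable]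
  have hIcc : (volume (Set.Icc (0:ℝ) 1)).toReal = 1 := by
    simp [Real.volume_Icc]
  have hWmeas : ∀ u : ℝ, Measurable (fun p : ℝ × M => |Ψ (p.1 + u, p.2) - Ψ (p.1, p.2)|) := by
    intro u
    apply Measurable.abs
    apply Measurable.sub
    · exact hΨmeas.comp ((measurable_fst.add_const u).prodMk measurable_snd)
    · exact hΨmeas.comp (measurable_fst.prodMk measurable_snd)
  have claim1 : ∀ u : ℝ, (∫ x, |f (φ u x) - f x| ∂μ)
      = ∫ x, (∫ s in Set.Icc (0:ℝ) 1, |Ψ (s + u, x) - Ψ (s, x)|) ∂μ := by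
    intro u
    have h1 : (∫ x, |f (φ u x) - f x| ∂μ)
        = ∫ s in Set.Icc (0:ℝ) 1, (∫ x, |Ψ (s + u, x) - Ψ (s, x)| ∂μ) := by
      rw [show (∫ s in Set.Icc (0:ℝ) 1, (∫ x, |Ψ (s + u, x) - Ψ (s, x)| ∂μ))
          = ∫ s in Set.Icc (0:ℝ) 1, (∫ x, |f (φ u x) - f x| ∂μ) from
        integral_congr_ae (Eventually.of_forall fun s => hG u s)]
      rw [setIntegral_const]
      rw [measureReal_def, hIcc, one_smul]
    rw [h1]
    have hint : Integrable (Function.uncurry fun (s : ℝ) (x : M) => |Ψ (s + u, x) - Ψ (s, x)|)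
        ((volume.restrict (Set.Icc (0:ℝ) 1)).prod μ) := by
      apply Integrable.mono' (integrable_const 1) (hWmeas u).aestronglyMeasurable
      apply Eventually.of_forall
      rintro ⟨s, x⟩
      simp only [Function.uncurry_apply_pair, Real.norm_eq_abs, abs_abs]
      exact habs_le _ _
    exact integral_integral_swap hint
  rw [tendsto_iff_seq_tendsto]
  intro v hv
  have hev1 : ∀ᶠ n in atTop, |v n| ≤ 1 := by
    have h := hv (Metric.closedBall_mem_nhds (0:ℝ) one_pos)
    filter_upwards [h] with n hn
    simpa [Real.dist_eq] using hn
  -- pointwise limit in x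
  have hFlim : ∀ x : M, Tendsto
      (fun n => ∫ s in Set.Icc (0:ℝ) 1, |Ψ (s + v n, x) - Ψ (s, x)|) atTop (𝓝 0) := by
    intro x
    set Sx : Set ℝ := {s : ℝ | φ s x ∈ A} with hSxdef
    have hSxmeas : MeasurableSet Sx := by
      have hm : Measurable fun s : ℝ => φ s x :=
        hφm.comp (measurable_id.prodMk measurable_const)
      exact hm hA
    set S' : Set ℝ := Sx ∩ Set.Icc (-1 : ℝ) 2 with hS'def
    have hS'meas : MeasurableSet S' := hSxmeas.inter measurableSet_Icc
    have hS'fin : volume S' ≠ ⊤ := by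
      have hle : volume S' ≤ volume (Set.Icc (-1:ℝ) 2) :=
        measure_mono Set.inter_subset_right
      exact ne_top_of_le_ne_top (by simp [Real.volume_Icc]) hle
    have hΨind : ∀ s : ℝ, Ψ (s, x) = Sx.indicator 1 s := by
      intro s
      by_cases hs : s ∈ Sx
      · have : φ s x ∈ A := hs
        simp [hΨdef, hfdef, Set.indicator_apply, this, hs]
      · have : φ s x ∉ A := hs
        simp [hΨdef, hfdef, Set.indicator_apply, this, hs]
    have hbound : ∀ u : ℝ, |u| ≤ 1 →
        (∫ s in Set.Icc (0:ℝ) 1, |Ψ (s + u, x) - Ψ (s, x)|)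
          ≤ (volume (((fun s : ℝ => s + u) ⁻¹' S') ∆ S')).toReal := by
      intro u hu
      have hptwise : ∀ s ∈ Set.Icc (0:ℝ) 1,
          |Ψ (s + u, x) - Ψ (s, x)| = ((((fun s : ℝ => s + u) ⁻¹' S') ∆ S')).indicator 1 s := by
        intro s hs
        obtain ⟨hs0, hs1⟩ := hs
        have habs := abs_le.mp hu
        have hmem1 : s ∈ Sx ↔ s ∈ S' := by
          constructor
          · intro h; exact ⟨h, by constructor <;> linarith⟩
          · intro h; exact h.1
        have hmem2 : s + u ∈ Sx ↔ s + u ∈ S' := by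
          constructor
          · intro h; exact ⟨h, by constructor <;> linarith⟩
          · intro h; exact h.1
        rw [hΨind, hΨind]
        by_cases h1 : s + u ∈ Sx <;> by_cases h2 : s ∈ Sx
        · simp only [Set.indicator_apply, h1, h2, if_true, Set.mem_symmDiff, Set.mem_preimage,
            hmem1.mp h2, hmem2.mp h1]
          norm_num
        · have h2' : s ∉ S' := fun hc => h2 (hmem1.mpr hc)
          simp only [Set.indicator_apply, Set.mem_symmDiff, Set.mem_preimage, hmem2.mp h1, h2',
            h1, h2]
          norm_num [hmem2.mp h1, h2']
        · have h1' : s + u ∉ S' := fun hc => h1 (hmem2.mpr hc)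
          simp only [Set.indicator_apply, Set.mem_symmDiff, Set.mem_preimage, h1', hmem1.mp h2,
            h1, h2]
          norm_num [hmem1.mp h2, h1']
        · have h1' : s + u ∉ S' := fun hc => h1 (hmem2.mpr hc)
          have h2' : s ∉ S' := fun hc => h2 (hmem1.mpr hc)
          simp only [Set.indicator_apply, Set.mem_symmDiff, Set.mem_preimage, h1', h2', h1, h2]
          norm_num [h1', h2']
      have hsymm_meas : MeasurableSet ((((fun s : ℝ => s + u) ⁻¹' S') ∆ S')) :=
        ((measurable_add_const u) hS'meas).symmDiff hS'meas
      have hsymm_fin : volume ((((fun s : ℝ => s + u) ⁻¹' S') ∆ S')) ≠ ⊤ := by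
        have hpre_fin : volume ((fun s : ℝ => s + u) ⁻¹' S') ≠ ⊤ := by
          rw [(measurePreserving_add_right volume u).measure_preimage
            hS'meas.nullMeasurableSet]
          exact hS'fin
        have hle : volume ((((fun s : ℝ => s + u) ⁻¹' S') ∆ S'))
            ≤ volume ((fun s : ℝ => s + u) ⁻¹' S') + volume S' :=
          le_trans (measure_mono Set.symmDiff_subset_union) (measure_union_le _ _)
        exact ne_top_of_le_ne_top (by simp [ENNReal.add_ne_top, hpre_fin, hS'fin]) hle
      have hind_int : Integrable ((((fun s : ℝ => s + u) ⁻¹' S') ∆ S').indicator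
          (fun _ => (1:ℝ))) volume := by
        rw [integrable_indicator_iff hsymm_meas]
        refine (integrableOn_const_iff).mpr (Or.inr ?_)
        exact lt_top_iff_ne_top.mpr hsymm_fin
      calc (∫ s in Set.Icc (0:ℝ) 1, |Ψ (s + u, x) - Ψ (s, x)|)
          = ∫ s in Set.Icc (0:ℝ) 1,
              ((((fun s : ℝ => s + u) ⁻¹' S') ∆ S')).indicator 1 s :=
            setIntegral_congr_fun measurableSet_Icc hptwise
        _ ≤ ∫ s, ((((fun s : ℝ => s + u) ⁻¹' S') ∆ S')).indicator 1 s :=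
            setIntegral_le_integral hind_int
              (Eventually.of_forall fun s => Set.indicator_apply_nonneg fun _ => zero_le_one)
        _ = (volume ((((fun s : ℝ => s + u) ⁻¹' S') ∆ S'))).toReal :=
            integral_indicator_one hsymm_meas
    have hρ : Tendsto
        (fun n => (volume (((fun s : ℝ => s + v n) ⁻¹' S') ∆ S')).toReal) atTop (𝓝 0) :=
      (translation_cont hS'meas hS'fin).comp hv
    apply squeeze_zero'
    · exact Eventually.of_forall fun n => integral_nonneg fun s => abs_nonneg _
    · filter_upwards [hev1] with n hn
      exact hbound (v n) hn
    · exact hρ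
  -- dominated convergence
  have hFmeas : ∀ n : ℕ, AEStronglyMeasurable
      (fun x => ∫ s in Set.Icc (0:ℝ) 1, |Ψ (s + v n, x) - Ψ (s, x)|) μ := by
    intro n
    have hmeas : AEStronglyMeasurable (fun q : M × ℝ => |Ψ (q.2 + v n, q.1) - Ψ (q.2, q.1)|)
        (μ.prod (volume.restrict (Set.Icc (0:ℝ) 1))) := by
      apply Measurable.aestronglyMeasurable
      apply Measurable.abs
      apply Measurable.sub
      · exact hΨmeas.comp ((measurable_snd.add_const (v n)).prodMk measurable_fst)
      · exact hΨmeas.comp (measurable_snd.prodMk measurable_fst)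
    exact hmeas.integral_prod_right'
  have hθle1 : ∀ (u : ℝ) (x : M), (∫ s in Set.Icc (0:ℝ) 1, |Ψ (s + u, x) - Ψ (s, x)|) ≤ 1 := by
    intro u x
    have hint1 : Integrable (fun s => |Ψ (s + u, x) - Ψ (s, x)|)
        (volume.restrict (Set.Icc (0:ℝ) 1)) := by
      have hm : Measurable fun s : ℝ => |Ψ (s + u, x) - Ψ (s, x)| := by
        apply Measurable.abs
        apply Measurable.sub
        · exact hΨmeas.comp ((measurable_id.add_const u).prodMk measurable_const)
        · exact hΨmeas.comp (measurable_id.prodMk measurable_const)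
      apply Integrable.mono' (integrable_const 1) hm.aestronglyMeasurable
      apply Eventually.of_forall
      intro s
      rw [Real.norm_eq_abs, abs_abs]
      exact habs_le _ _
    calc (∫ s in Set.Icc (0:ℝ) 1, |Ψ (s + u, x) - Ψ (s, x)|)
        ≤ ∫ _s in Set.Icc (0:ℝ) 1, (1:ℝ) :=
          integral_mono hint1 (integrable_const 1) fun s => habs_le _ _
      _ = 1 := by rw [setIntegral_const, measureReal_def, hIcc, one_smul]
  have hdct := tendsto_integral_of_dominated_convergence (μ := μ)
    (F := fun n x => ∫ s in Set.Icc (0:ℝ) 1, |Ψ (s + v n, x) - Ψ (s, x)|)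
    (f := fun _ => (0:ℝ)) (bound := fun _ => (1:ℝ)) hFmeas (integrable_const 1)
    (fun n => Eventually.of_forall fun x => by
      rw [Real.norm_eq_abs, abs_of_nonneg (integral_nonneg fun s => abs_nonneg _)]
      exact hθle1 (v n) x)
    (Eventually.of_forall hFlim)
  simp only [integral_zero] at hdct
  have hfinal : ((fun u => (μ ((φ u ⁻¹' A) ∆ A)).toReal) ∘ v)
      = fun n => ∫ x, (∫ s in Set.Icc (0:ℝ) 1, |Ψ (s + v n, x) - Ψ (s, x)|) ∂μ := by
    funext n
    rw [Function.comp_apply, step0, claim1]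
  rw [hfinal]
  exact hdct

lemma log_nat_mono {m k : ℕ} (h : m ≤ k) : Real.log m ≤ Real.log k := by
  rcases Nat.eq_zero_or_pos m with h0 | hpos
  · rw [h0]
    simpa using Real.log_natCast_nonneg k
  · exact Real.log_le_log (by exact_mod_cast hpos) (by exact_mod_cast h)

open scoped symmDiff in
lemma step_error {φ : ℝ → M → M} (hφ0 : φ 0 = id) (hφadd : ∀ s t, φ (s + t) = φ s ∘ φ t)
    (hφm : Measurable fun p : ℝ × M => φ p.1 p.2)
    (hmp : ∀ t, MeasurePreserving (φ t) μ μ)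
    {c : M → ℕ} (hc : Measurable c) (hfin : (Set.range c).Finite)
    {ε : ℝ} (hε : 0 < ε) :
    ∃ δ > 0, ∀ d : ℝ, |d| ≤ δ →
      colorEntropy μ (pair (c ∘ φ d) c) - colorEntropy μ c ≤ ε := by
  classical
  set T := hfin.toFinset with hTdef
  have hT : Set.range c ⊆ ↑T := by simp [hTdef]
  have hcs : ∀ i, MeasurableSet (c ⁻¹' {i}) := fun i => hc (measurableSet_singleton i)
  set ej : ℝ → ℕ → ℝ :=
    fun d j => ∑ i ∈ T.erase j, pm μ (pair (c ∘ φ d) c) (i, j) with hejdef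
  set E : ℝ → ℝ := fun d => ∑ j ∈ T, ej d j with hEdef
  have hq_nonneg : ∀ d i j, 0 ≤ pm μ (pair (c ∘ φ d) c) (i, j) := fun d i j => pm_nonneg _ _
  have hej_nonneg : ∀ d j, 0 ≤ ej d j :=
    fun d j => Finset.sum_nonneg fun i _ => hq_nonneg d i j
  have hE_nonneg : ∀ d, 0 ≤ E d := fun d => Finset.sum_nonneg fun j _ => hej_nonneg d j
  have hcs' : ∀ d : ℝ, ∀ i, MeasurableSet ((c ∘ φ d) ⁻¹' {i}) :=
    fun d i => flow_measurable hφm d (hcs i)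
  have hrange' : ∀ d : ℝ, Set.range (c ∘ φ d) ⊆ ↑T :=
    fun d => le_trans (Set.range_comp_subset_range _ _) hT
  have hmarg : ∀ (d : ℝ) (j : ℕ), pm μ c j = ∑ i ∈ T, pm μ (pair (c ∘ φ d) c) (i, j) := by
    intro d j
    have h := toReal_meas_eq_sum (μ := μ) (hcs' d) (hrange' d) (hcs j)
    unfold pm
    rw [h]
    apply Finset.sum_congr rfl
    intro i _
    rw [pair_preimage, Set.inter_comm]
  have hmarg' : ∀ (d : ℝ) (j : ℕ), j ∈ T →
      pm μ c j = pm μ (pair (c ∘ φ d) c) (j, j) + ej d j := by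
    intro d j hj
    rw [hmarg d j, hejdef, ← Finset.add_sum_erase T _ hj]
  -- the entropy bound
  have hBOUND : ∀ d : ℝ, colorEntropy μ (pair (c ∘ φ d) c) - colorEntropy μ c
      ≤ E d + (Real.negMulLog (E d) + E d * Real.log T.card) + E d * Real.log T.card := by
    intro d
    have hrangep : Set.range (pair (c ∘ φ d) c) ⊆ ↑(T ×ˢ T) := by
      rintro _ ⟨x, rfl⟩
      simp only [Finset.coe_product, Set.mem_prod]
      exact ⟨hrange' d ⟨x, rfl⟩, hT ⟨x, rfl⟩⟩
    have hHpair : colorEntropy μ (pair (c ∘ φ d) c)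
        = ∑ j ∈ T, ∑ i ∈ T, Real.negMulLog (pm μ (pair (c ∘ φ d) c) (i, j)) := by
      rw [colorEntropy_eq_sum hrangep, Finset.sum_product_right]
    have hinner : ∀ j ∈ T, ∑ i ∈ T, Real.negMulLog (pm μ (pair (c ∘ φ d) c) (i, j))
        ≤ Real.negMulLog (pm μ c j) + ej d j
          + (Real.negMulLog (ej d j) + ej d j * Real.log T.card) := by
      intro j hj
      rw [← Finset.add_sum_erase T _ hj]
      have hb1 : Real.negMulLog (pm μ (pair (c ∘ φ d) c) (j, j))
          ≤ Real.negMulLog (pm μ c j) + ej d j := by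
        have h1 : pm μ (pair (c ∘ φ d) c) (j, j) ≤ pm μ c j := by
          rw [hmarg' d j hj]
          linarith [hej_nonneg d j]
        have h2 := negMulLog_le_of_le (hq_nonneg d j j) h1 (pm_le_one c j)
        have h3 : pm μ c j - pm μ (pair (c ∘ φ d) c) (j, j) = ej d j := by
          rw [hmarg' d j hj]; ring
        linarith [h2, h3.le]
      have hb2 : ∑ i ∈ T.erase j, Real.negMulLog (pm μ (pair (c ∘ φ d) c) (i, j))
          ≤ Real.negMulLog (ej d j) + ej d j * Real.log T.card := by
        have h4 := sum_negMulLog_le (T.erase j)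
          (fun i => pm μ (pair (c ∘ φ d) c) (i, j)) (fun i _ => hq_nonneg d i j)
        have h5 : ej d j * Real.log ((T.erase j).card) ≤ ej d j * Real.log T.card :=
          mul_le_mul_of_nonneg_left (log_nat_mono (Finset.card_le_card (Finset.erase_subset _ _)))
            (hej_nonneg d j)
        rw [hejdef] at h5 ⊢
        calc ∑ i ∈ T.erase j, Real.negMulLog (pm μ (pair (c ∘ φ d) c) (i, j))
            ≤ Real.negMulLog (∑ i ∈ T.erase j, pm μ (pair (c ∘ φ d) c) (i, j))
              + (∑ i ∈ T.erase j, pm μ (pair (c ∘ φ d) c) (i, j))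
                * Real.log ((T.erase j).card) := h4
          _ ≤ _ := by exact add_le_add_right h5 _
      linarith
    have hHc : colorEntropy μ c = ∑ j ∈ T, Real.negMulLog (pm μ c j) :=
      colorEntropy_eq_sum hT
    have hsum := Finset.sum_le_sum hinner
    rw [← hHpair] at hsum
    have hsplit : ∑ j ∈ T, (Real.negMulLog (pm μ c j) + ej d j
        + (Real.negMulLog (ej d j) + ej d j * Real.log T.card))
        = colorEntropy μ c + E d + ((∑ j ∈ T, Real.negMulLog (ej d j))
            + E d * Real.log T.card) := by
      rw [hHc, hEdef]
      rw [Finset.sum_add_distrib, Finset.sum_add_distrib, Finset.sum_add_distrib,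
        ← Finset.sum_mul]
    rw [hsplit] at hsum
    have hb3 : ∑ j ∈ T, Real.negMulLog (ej d j)
        ≤ Real.negMulLog (E d) + E d * Real.log T.card := by
      exact sum_negMulLog_le T (ej d) (fun j _ => hej_nonneg d j)
    linarith
  -- comparison with symmetric differences
  have hE_le : ∀ d : ℝ, E d ≤ ∑ j ∈ T, (μ ((φ d ⁻¹' (c ⁻¹' {j})) ∆ (c ⁻¹' {j}))).toReal := by
    intro d
    apply Finset.sum_le_sum
    intro j hj
    have hBmeas : MeasurableSet (φ d ⁻¹' (c ⁻¹' {j})) := flow_measurable hφm d (hcs j)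
    have hsplit := measure_inter_add_diff (μ := μ) (c ⁻¹' {j}) hBmeas
    have hej_eq : ej d j = (μ (c ⁻¹' {j} \ φ d ⁻¹' (c ⁻¹' {j}))).toReal := by
      have h1 : ej d j = pm μ c j - pm μ (pair (c ∘ φ d) c) (j, j) := by
        rw [hmarg' d j hj]; ring
      rw [h1]
      have h2 : pm μ (pair (c ∘ φ d) c) (j, j)
          = (μ (c ⁻¹' {j} ∩ φ d ⁻¹' (c ⁻¹' {j}))).toReal := by
        unfold pm
        rw [pair_preimage]
        rw [show (c ∘ φ d) ⁻¹' {j} = φ d ⁻¹' (c ⁻¹' {j}) from rfl, Set.inter_comm]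
      rw [h2]
      unfold pm
      rw [← hsplit, ENNReal.toReal_add (measure_ne_top μ _) (measure_ne_top μ _)]
      ring
    rw [hej_eq]
    apply toReal_mono_meas
    intro x hx
    rw [Set.mem_symmDiff]
    right
    exact ⟨hx.1, hx.2⟩
  have hErtends : Tendsto
      (fun d : ℝ => ∑ j ∈ T, (μ ((φ d ⁻¹' (c ⁻¹' {j})) ∆ (c ⁻¹' {j}))).toReal)
      (𝓝 0) (𝓝 0) := by
    have h := tendsto_finset_sum T
      (fun j _ => flow_cont (μ := μ) hφ0 hφadd hφm hmp (hcs j))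
    simpa using h
  have hEtends : Tendsto E (𝓝 0) (𝓝 0) :=
    squeeze_zero hE_nonneg hE_le hErtends
  set err : ℝ → ℝ := fun x => x + (Real.negMulLog x + x * Real.log T.card)
      + x * Real.log T.card with herrdef
  have herrcont : Continuous err := by
    apply Continuous.add
    apply Continuous.add
    · exact continuous_id
    · exact Real.continuous_negMulLog.add (continuous_id.mul continuous_const)
    · exact continuous_id.mul continuous_const
  have herr0 : err 0 = 0 := by simp [herrdef]
  have hcompt : Tendsto (fun d => err (E d)) (𝓝 0) (𝓝 0) := by
    have h := (herrcont.tendsto 0).comp hEtends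
    rwa [herr0] at h
  have hev : ∀ᶠ d in 𝓝 (0:ℝ), err (E d) ≤ ε :=
    hcompt.eventually (eventually_le_nhds hε)
  rw [Metric.eventually_nhds_iff] at hev
  obtain ⟨δ, hδpos, hδ⟩ := hev
  refine ⟨δ / 2, by linarith, ?_⟩
  intro d hd
  have hdist : dist d 0 < δ := by
    rw [Real.dist_eq, sub_zero]
    linarith [hd]
  calc colorEntropy μ (pair (c ∘ φ d) c) - colorEntropy μ c
      ≤ err (E d) := hBOUND d
    _ ≤ ε := hδ hdist

lemma core {φ : ℝ → M → M} (hφ0 : φ 0 = id) (hφadd : ∀ s t, φ (s + t) = φ s ∘ φ t)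
    (hφm : Measurable fun p : ℝ × M => φ p.1 p.2)
    (hmp : ∀ t, MeasurePreserving (φ t) μ μ)
    {s : ℝ} (hs : 0 < s) {c : M → ℕ} (hc : Measurable c) (hfin : (Set.range c).Finite)
    {ε : ℝ} (hε : 0 < ε) :
    ∃ D : M → ℕ, Measurable D ∧ (Set.range D).Finite ∧
      hent μ (φ s) c ≤ s * hent μ (φ 1) D + ε := by
  classical
  obtain ⟨δ, hδpos, hδ⟩ := step_error (μ := μ) hφ0 hφadd hφm hmp hc hfin hε
  set N : ℕ := max 1 ⌈1 / δ⌉₊ with hNdef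
  have hN1 : 1 ≤ N := le_max_left _ _
  have hNpos : 0 < (N : ℝ) := by exact_mod_cast lt_of_lt_of_le one_pos hN1
  have hNδ : 1 / (N : ℝ) ≤ δ := by
    have h1 : 1 / δ ≤ (⌈1 / δ⌉₊ : ℝ) := Nat.le_ceil _
    have h2 : ((⌈1 / δ⌉₊ : ℕ) : ℝ) ≤ (N : ℝ) := by exact_mod_cast le_max_right 1 ⌈1 / δ⌉₊
    have h3 : 1 / δ ≤ (N : ℝ) := le_trans h1 h2
    have h4 : 1 / (N : ℝ) ≤ 1 / (1 / δ) :=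
      one_div_le_one_div_of_le (by positivity) h3
    rwa [one_div_one_div] at h4
  set D0 : M → (Fin N → ℕ) := fun x j => c (φ ((j : ℕ) / (N : ℝ)) x) with hD0def
  obtain ⟨enc, henc⟩ := exists_injective_nat (Fin N → ℕ)
  set D : M → ℕ := enc ∘ D0 with hDdef
  have hD0meas : ∀ f : Fin N → ℕ, MeasurableSet (D0 ⁻¹' {f}) := by
    intro f
    have h : D0 ⁻¹' {f} = ⋂ j : Fin N, (φ ((j : ℕ) / (N : ℝ))) ⁻¹' (c ⁻¹' {f j}) := by
      ext x; simp [hD0def, funext_iff]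
    rw [h]
    exact MeasurableSet.iInter fun j =>
      flow_measurable hφm _ (hc (measurableSet_singleton _))
  have hDsing : ∀ m : ℕ, MeasurableSet (D ⁻¹' {m}) := by
    intro m
    have h : D ⁻¹' {m} = ⋃ f ∈ enc ⁻¹' {m}, D0 ⁻¹' {f} := by
      ext x; simp [hDdef]
    rw [h]
    exact MeasurableSet.biUnion (Set.to_countable _) fun f _ => hD0meas f
  have hDmeas : Measurable D := measurable_to_countable' hDsing
  have hD0fin : (Set.range D0).Finite := by
    apply (Set.Finite.pi (t := fun _ : Fin N => Set.range c) fun _ => hfin).subset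
    rintro _ ⟨x, rfl⟩
    exact fun j _ => ⟨_, rfl⟩
  have hDfin : (Set.range D).Finite := by
    have h : Set.range D ⊆ enc '' (Set.range D0) := by
      rintro _ ⟨x, rfl⟩; exact ⟨D0 x, ⟨x, rfl⟩, rfl⟩
    exact (hD0fin.image enc).subset h
  set Mn : ℕ → ℕ := fun n => ⌊((n : ℝ) - 1) * s⌋₊ + 1 with hMndef
  -- KEY pointwise inequality
  have hKEY : ∀ n : ℕ, aent μ (φ s) c n ≤ aent μ (φ 1) D (Mn n) + n * ε := by
    intro n
    set u : Fin n → M → ℕ := fun i x => c (φ ((i : ℕ) * s) x) with hudef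
    have hjoint_eq : jointC (φ s) c n = fun x (i : Fin n) => u i x := by
      funext x i
      show c ((φ s)^[(i : ℕ)] x) = c (φ ((i : ℕ) * s) x)
      rw [flow_iterate hφ0 hφadd]
    have humeas : ∀ i j, MeasurableSet (u i ⁻¹' {j}) := fun i j =>
      flow_measurable hφm _ (hc (measurableSet_singleton j))
    have hufin : ∀ i, (Set.range (u i)).Finite := by
      intro i
      apply hfin.subset
      rintro _ ⟨x, rfl⟩
      exact ⟨_, rfl⟩
    set v : M → (Fin (Mn n) → ℕ) := jointC (φ 1) D (Mn n) with hvdef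
    have hvmeas : ∀ f, MeasurableSet (v ⁻¹' {f}) :=
      jointC_meas (flow_measurable hφm 1) hDmeas (Mn n)
    have hvfin : (Set.range v).Finite := jointC_fin hDfin (Mn n)
    have hchain := colorEntropy_chain (μ := μ) n u humeas hufin v hvmeas hvfin
    have hcoarse : colorEntropy μ (fun x (i : Fin n) => u i x)
        ≤ colorEntropy μ (pair (fun x (i : Fin n) => u i x) v) :=
      colorEntropy_le_pair (big_meas u humeas) hvmeas (big_fin u hufin) hvfin
    have hstep : ∀ i : Fin n,
        colorEntropy μ (pair (u i) v) - colorEntropy μ v ≤ ε := by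
      intro i
      set mi : ℕ := ⌊((i : ℕ) : ℝ) * s⌋₊ with hmidef
      have hmi_lt : mi < Mn n := by
        rw [hMndef, hmidef]
        have hi : ((i : ℕ) : ℝ) + 1 ≤ (n : ℝ) := by exact_mod_cast i.isLt
        have h1 : ((i : ℕ) : ℝ) * s ≤ ((n : ℝ) - 1) * s :=
          mul_le_mul_of_nonneg_right (by linarith) hs.le
        exact Nat.lt_succ_of_le (Nat.floor_mono h1)
      set ri : ℝ := ((i : ℕ) : ℝ) * s - mi with hridef
      have his_nonneg : (0 : ℝ) ≤ ((i : ℕ) : ℝ) * s := by positivity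
      have hri0 : 0 ≤ ri := by
        rw [hridef, hmidef]
        have := Nat.floor_le his_nonneg
        linarith
      have hri1 : ri < 1 := by
        rw [hridef, hmidef]
        have := Nat.lt_floor_add_one (((i : ℕ) : ℝ) * s)
        linarith
      set ji : ℕ := ⌊ri * N⌋₊ with hjidef
      have hji_lt : ji < N := by
        rw [hjidef]
        rw [Nat.floor_lt (mul_nonneg hri0 hNpos.le)]
        calc ri * N < 1 * N := by
              apply mul_lt_mul_of_pos_right hri1 hNpos
          _ = N := one_mul _
      set τ : ℝ := (mi : ℝ) + (ji : ℝ) / N with hτdef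
      set di : ℝ := ((i : ℕ) : ℝ) * s - τ with hdidef
      have hdi_eq : di = ri - (ji : ℝ) / N := by rw [hdidef, hτdef, hridef]; ring
      have hji_le : (ji : ℝ) ≤ ri * N := Nat.floor_le (mul_nonneg hri0 hNpos.le)
      have hji_gt : ri * N < (ji : ℝ) + 1 := Nat.lt_floor_add_one _
      have hdi0 : 0 ≤ di := by
        rw [hdi_eq, sub_nonneg, div_le_iff₀ hNpos]
        linarith
      have hdi_le : di ≤ 1 / N := by
        rw [hdi_eq]
        have h5 : ri ≤ ((ji : ℝ) + 1) / N := by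
          rw [le_div_iff₀ hNpos]
          linarith
        have h6 : ((ji : ℝ) + 1) / N = (ji : ℝ) / N + 1 / N := by ring
        linarith
      have hdiδ : |di| ≤ δ := by
        rw [abs_of_nonneg hdi0]
        exact le_trans hdi_le hNδ
      set gi : (Fin (Mn n) → ℕ) → ℕ := fun F =>
        if h : ∃ y : Fin N → ℕ, enc y = F ⟨mi, hmi_lt⟩ then h.choose ⟨ji, hji_lt⟩ else 0
        with hgidef
      have hgiv : gi ∘ v = fun x => c (φ τ x) := by
        funext x
        have hvx : v x ⟨mi, hmi_lt⟩ = enc (D0 (φ ((mi : ℕ) : ℝ) x)) := by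
          show D ((φ 1)^[((⟨mi, hmi_lt⟩ : Fin (Mn n)) : ℕ)] x) = enc (D0 (φ ((mi : ℕ) : ℝ) x))
          rw [flow_iterate hφ0 hφadd, mul_one]
          rfl
        show (if h : ∃ y, enc y = v x ⟨mi, hmi_lt⟩ then h.choose ⟨ji, hji_lt⟩ else 0)
            = c (φ τ x)
        have hex : ∃ y, enc y = v x ⟨mi, hmi_lt⟩ := ⟨D0 (φ ((mi : ℕ) : ℝ) x), hvx.symm⟩
        rw [dif_pos hex]
        have hchoose : hex.choose = D0 (φ ((mi : ℕ) : ℝ) x) :=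
          henc (hex.choose_spec.trans hvx)
        rw [hchoose]
        show c (φ (((⟨ji, hji_lt⟩ : Fin N) : ℕ) / (N : ℝ)) (φ ((mi : ℕ) : ℝ) x)) = c (φ τ x)
        have h7 := congrFun (hφadd (((ji : ℕ) : ℝ) / (N : ℝ)) ((mi : ℕ) : ℝ)) x
        rw [Function.comp_apply] at h7
        rw [show (((⟨ji, hji_lt⟩ : Fin N) : ℕ) : ℝ) = ((ji : ℕ) : ℝ) from rfl]
        rw [← h7]
        have h8 : ((ji : ℕ) : ℝ) / (N : ℝ) + ((mi : ℕ) : ℝ) = τ := by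
          rw [hτdef]; ring
        rw [h8]
      have hgibbs := gibbs_main (μ := μ) (humeas i) hvmeas (hufin i) hvfin gi
      set S : M → M := φ τ with hSdef
      have hu_decomp : u i = (c ∘ φ di) ∘ S := by
        funext x
        show c (φ (((i : ℕ) : ℝ) * s) x) = c (φ di (φ τ x))
        have h9 := congrFun (hφadd di τ) x
        rw [Function.comp_apply] at h9
        rw [← h9]
        have h10 : di + τ = ((i : ℕ) : ℝ) * s := by rw [hdidef]; ring
        rw [h10]
      have hw_eq : gi ∘ v = c ∘ S := by rw [hgiv]; rfl
      have hpair_eq : pair (u i) (gi ∘ v) = (pair (c ∘ φ di) c) ∘ S := by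
        rw [hu_decomp, hw_eq]; rfl
      have hH1 : colorEntropy μ (pair (u i) (gi ∘ v))
          = colorEntropy μ (pair (c ∘ φ di) c) := by
        rw [hpair_eq]
        exact colorEntropy_comp_mp (hmp τ)
          (pair_meas (fun a => flow_measurable hφm di (hc (measurableSet_singleton a)))
            (fun a => hc (measurableSet_singleton a)))
      have hH2 : colorEntropy μ (gi ∘ v) = colorEntropy μ c := by
        rw [hw_eq]
        exact colorEntropy_comp_mp (hmp τ) (fun a => hc (measurableSet_singleton a))
      have hδbound := hδ di hdiδ
      linarith [hgibbs]
    have hsum : ∑ i : Fin n, (colorEntropy μ (pair (u i) v) - colorEntropy μ v)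
        ≤ ∑ _i : Fin n, ε := Finset.sum_le_sum fun i _ => hstep i
    rw [Finset.sum_const, Finset.card_univ, Fintype.card_fin, nsmul_eq_mul] at hsum
    have haeq : aent μ (φ s) c n = colorEntropy μ (fun x (i : Fin n) => u i x) := by
      rw [aent, hjoint_eq]
    have hva : colorEntropy μ v = aent μ (φ 1) D (Mn n) := rfl
    rw [haeq]
    calc colorEntropy μ (fun x (i : Fin n) => u i x)
        ≤ colorEntropy μ (pair (fun x (i : Fin n) => u i x) v) := hcoarse
      _ ≤ colorEntropy μ v
            + ∑ i : Fin n, (colorEntropy μ (pair (u i) v) - colorEntropy μ v) := hchain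
      _ ≤ aent μ (φ 1) D (Mn n) + (n : ℝ) * ε := by
          rw [← hva]; linarith
  -- limits
  have htds : Tendsto (fun n : ℕ => aent μ (φ s) c n / n) atTop (𝓝 (hent μ (φ s) c)) :=
    hent_tendsto (flow_measurable hφm s) (hmp s) hc hfin
  have htdD : Tendsto (fun n : ℕ => aent μ (φ 1) D n / n) atTop (𝓝 (hent μ (φ 1) D)) :=
    hent_tendsto (flow_measurable hφm 1) (hmp 1) hDmeas hDfin
  have hMn_top : Tendsto Mn atTop atTop := by
    have h1 : Tendsto (fun n : ℕ => ((n : ℝ) - 1) * s) atTop atTop :=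
      Tendsto.atTop_mul_const hs
        (tendsto_atTop_add_const_right atTop (-1) tendsto_natCast_atTop_atTop)
    have h2 : Tendsto (fun n : ℕ => ⌊((n : ℝ) - 1) * s⌋₊) atTop atTop :=
      (tendsto_nat_floor_atTop (α := ℝ)).comp h1
    exact tendsto_atTop_mono (fun n => Nat.le_succ _) h2
  have hMn_div : Tendsto (fun n : ℕ => ((Mn n : ℕ) : ℝ) / n) atTop (𝓝 s) := by
    have hzero : Tendsto (fun n : ℕ => (1 : ℝ) / n) atTop (𝓝 0) :=
      tendsto_const_div_atTop_nhds_zero_nat 1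
    have hszero : Tendsto (fun n : ℕ => s / n) atTop (𝓝 0) :=
      tendsto_const_div_atTop_nhds_zero_nat s
    have h2zero : Tendsto (fun n : ℕ => (2 : ℝ) / n) atTop (𝓝 0) :=
      tendsto_const_div_atTop_nhds_zero_nat 2
    have hlow : Tendsto (fun n : ℕ => s - s / n) atTop (𝓝 s) := by
      have h := Tendsto.sub (tendsto_const_nhds : Tendsto (fun _ : ℕ => s) atTop (𝓝 s)) hszero
      simpa using h
    have hup : Tendsto (fun n : ℕ => s - s / n + 2 / n) atTop (𝓝 s) := by
      have := hlow.add h2zero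
      simpa using this
    apply tendsto_of_tendsto_of_tendsto_of_le_of_le' hlow hup
    · filter_upwards [eventually_ge_atTop 1] with n hn
      have hn0 : (0 : ℝ) < n := by exact_mod_cast hn
      have hfl : ((n : ℝ) - 1) * s < ((Mn n : ℕ) : ℝ) := by
        rw [hMndef]
        push_cast
        exact Nat.lt_floor_add_one _
      have hne : (n : ℝ) ≠ 0 := hn0.ne'
      rw [show s - s / n = (((n : ℝ) - 1) * s) / n by field_simp]
      gcongr
    · filter_upwards [eventually_ge_atTop 1] with n hn
      have hn0 : (0 : ℝ) < n := by exact_mod_cast hn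
      have hn1 : (1 : ℝ) ≤ (n : ℝ) := by exact_mod_cast hn
      have hfl : ((Mn n : ℕ) : ℝ) ≤ ((n : ℝ) - 1) * s + 2 := by
        rw [hMndef]
        push_cast
        have h0 : (0 : ℝ) ≤ ((n : ℝ) - 1) * s := mul_nonneg (by linarith) hs.le
        have := Nat.floor_le h0
        linarith
      have hne : (n : ℝ) ≠ 0 := hn0.ne'
      rw [show s - s / n + 2 / n = (((n : ℝ) - 1) * s + 2) / n by field_simp]
      gcongr
  have hRHS : Tendsto (fun n : ℕ => aent μ (φ 1) D (Mn n) / n + ε) atTop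
      (𝓝 (hent μ (φ 1) D * s + ε)) := by
    have h1 : Tendsto (fun n : ℕ => aent μ (φ 1) D (Mn n) / ((Mn n : ℕ) : ℝ)) atTop
        (𝓝 (hent μ (φ 1) D)) := htdD.comp hMn_top
    have h2 := h1.mul hMn_div
    have h3 : ∀ n : ℕ, aent μ (φ 1) D (Mn n) / ((Mn n : ℕ) : ℝ) * (((Mn n : ℕ) : ℝ) / n)
        = aent μ (φ 1) D (Mn n) / n := by
      intro n
      have hMn0 : ((Mn n : ℕ) : ℝ) ≠ 0 := by
        rw [hMndef]
        push_cast
        positivity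
      field_simp
    exact (h2.congr h3).add tendsto_const_nhds
  have hle : ∀ᶠ n : ℕ in atTop, aent μ (φ s) c n / n ≤ aent μ (φ 1) D (Mn n) / n + ε := by
    filter_upwards [eventually_ge_atTop 1] with n hn
    have hn0 : (0 : ℝ) < n := by exact_mod_cast hn
    have hKEYn := hKEY n
    calc aent μ (φ s) c n / n ≤ (aent μ (φ 1) D (Mn n) + (n : ℝ) * ε) / n := by
          gcongr
      _ = aent μ (φ 1) D (Mn n) / n + ε := by
          field_simp
  have hfinal := le_of_tendsto_of_tendsto htds hRHS hle
  exact ⟨D, hDmeas, hDfin, by linarith [hfinal, mul_comm (hent μ (φ 1) D) s]⟩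

instance colNonempty : Nonempty {c : M → ℕ // Measurable c ∧ (Set.range c).Finite} :=
  ⟨⟨fun _ => 0, measurable_const,
    (Set.finite_singleton 0).subset (by rintro _ ⟨x, rfl⟩; simp)⟩⟩

lemma sup_scale {X Y : Type*} [Nonempty X] [Nonempty Y] (f : X → ℝ) (g : Y → ℝ)
    {s : ℝ} (hs : 0 < s)
    (h1 : ∀ x, ∀ ε : ℝ, 0 < ε → ∃ y, f x ≤ s * g y + ε)
    (h2 : ∀ y, ∀ ε : ℝ, 0 < ε → ∃ x, s * g y ≤ f x + ε) :
    ⨆ x, f x = s * ⨆ y, g y := by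
  by_cases hB : BddAbove (Set.range g)
  · have hfB : ∀ x, f x ≤ s * (⨆ y, g y) := by
      intro x
      apply le_of_forall_pos_le_add
      intro ε hε
      obtain ⟨y, hy⟩ := h1 x ε hε
      have hgy : g y ≤ ⨆ y, g y := le_ciSup hB y
      have := mul_le_mul_of_nonneg_left hgy hs.le
      linarith
    have hbf : BddAbove (Set.range f) :=
      ⟨s * ⨆ y, g y, by rintro _ ⟨x, rfl⟩; exact hfB x⟩
    apply le_antisymm (ciSup_le hfB)
    have hgf : ∀ y, g y ≤ (⨆ x, f x) / s := by
      intro y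
      rw [le_div_iff₀ hs]
      have hkey : s * g y ≤ ⨆ x, f x := by
        apply le_of_forall_pos_le_add
        intro ε hε
        obtain ⟨x, hx⟩ := h2 y ε hε
        exact hx.trans (add_le_add_left (le_ciSup hbf x) ε)
      rw [mul_comm]
      exact hkey
    have hg2 := ciSup_le hgf
    rw [le_div_iff₀ hs] at hg2
    rw [mul_comm] at hg2
    exact hg2
  · have hnf : ¬ BddAbove (Set.range f) := by
      rintro ⟨K, hK⟩
      apply hB
      refine ⟨(K + 1) / s, ?_⟩
      rintro _ ⟨y, rfl⟩
      obtain ⟨x, hx⟩ := h2 y 1 one_pos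
      have hfx : f x ≤ K := hK ⟨x, rfl⟩
      rw [le_div_iff₀ hs, mul_comm]
      linarith
    rw [Real.iSup_of_not_bddAbove hB, Real.iSup_of_not_bddAbove hnf, mul_zero]

lemma master {φ : ℝ → M → M} (hφ0 : φ 0 = id) (hφadd : ∀ s t, φ (s + t) = φ s ∘ φ t)
    (hφm : Measurable fun p : ℝ × M => φ p.1 p.2)
    (hmp : ∀ t, MeasurePreserving (φ t) μ μ) {s : ℝ} (hs : 0 < s) :
    metricEntropy (φ s) μ = s * metricEntropy (φ 1) μ := by
  rw [metricEntropy_eq (φ s), metricEntropy_eq (φ 1)]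
  apply sup_scale _ _ hs
  · intro x ε hε
    obtain ⟨D, hDm, hDf, hle⟩ := core (μ := μ) hφ0 hφadd hφm hmp hs x.2.1 x.2.2 hε
    exact ⟨⟨D, hDm, hDf⟩, hle⟩
  · intro y ε hε
    set ψ : ℝ → M → M := fun u => φ (s * u) with hψdef
    have hψ0 : ψ 0 = id := by
      show φ (s * 0) = id
      rw [mul_zero, hφ0]
    have hψadd : ∀ a b, ψ (a + b) = ψ a ∘ ψ b := by
      intro a b
      show φ (s * (a + b)) = φ (s * a) ∘ φ (s * b)
      rw [mul_add, hφadd]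
    have hψm : Measurable fun p : ℝ × M => ψ p.1 p.2 := by
      have h : (fun p : ℝ × M => ψ p.1 p.2)
          = (fun p : ℝ × M => φ p.1 p.2) ∘ (fun p : ℝ × M => (s * p.1, p.2)) := rfl
      rw [h]
      exact hφm.comp ((measurable_const.mul measurable_fst).prodMk measurable_snd)
    have hψmp : ∀ u, MeasurePreserving (ψ u) μ μ := fun u => hmp (s * u)
    have hs' : 0 < 1 / s := by positivity
    obtain ⟨D, hDm, hDf, hle⟩ := core (μ := μ) hψ0 hψadd hψm hψmp hs' y.2.1 y.2.2
      (show 0 < ε / s by positivity)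
    have he1 : ψ (1 / s) = φ 1 := by
      show φ (s * (1 / s)) = φ 1
      rw [mul_one_div_cancel hs.ne']
    have he2 : ψ 1 = φ s := by
      show φ (s * 1) = φ s
      rw [mul_one]
    rw [he1, he2] at hle
    refine ⟨⟨D, hDm, hDf⟩, ?_⟩
    have hmul := mul_le_mul_of_nonneg_left hle hs.le
    calc s * hent μ (φ 1) y.1 ≤ s * (1 / s * hent μ (φ s) D + ε / s) := hmul
      _ = hent μ (φ s) D + ε := by field_simp
  
lemma metricEntropy_neg_one {φ : ℝ → M → M} (hφ0 : φ 0 = id)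
    (hφadd : ∀ s t, φ (s + t) = φ s ∘ φ t)
    (hφm : Measurable fun p : ℝ × M => φ p.1 p.2)
    (hmp : ∀ t, MeasurePreserving (φ t) μ μ) :
    metricEntropy (φ (-1 : ℝ)) μ = metricEntropy (φ 1) μ := by
  rw [metricEntropy_eq, metricEntropy_eq]
  exact iSup_congr fun c => hent_inv hφ0 hφadd hφm hmp c.2.1 1

lemma metricEntropy_id : metricEntropy (id : M → M) μ = 0 := by
  rw [metricEntropy_eq]
  calc (⨆ c : {c : M → ℕ // Measurable c ∧ (Set.range c).Finite}, hent μ (id : M → M) c.1)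
      = ⨆ _c : {c : M → ℕ // Measurable c ∧ (Set.range c).Finite}, (0 : ℝ) :=
        iSup_congr fun c => hent_id c.2.1
    _ = 0 := ciSup_const

end AbramovAux

/-- Abramov's formula for flow maps: for a measure-preserving flow
`Φ = {φ^t}` on a probability space and any `t ∈ ℝ`, `h_μ(φ^t) = |t| · h_μ(φ¹)`. -/
theorem stmt10 {M : Type*} [MeasurableSpace M] (μ : Measure M) [IsProbabilityMeasure μ]
    (φ : ℝ → M → M) (hφ0 : φ 0 = id) (hφadd : ∀ s t, φ (s + t) = φ s ∘ φ t)
    (hφm : Measurable fun p : ℝ × M => φ p.1 p.2)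
    (hmp : ∀ t, MeasurePreserving (φ t) μ μ) (t : ℝ) :
    metricEntropy (φ t) μ = |t| * metricEntropy (φ 1) μ := by
  rcases lt_trichotomy t 0 with ht | rfl | ht
  · set ψ : ℝ → M → M := fun u => φ (-u) with hψdef
    have hψ0 : ψ 0 = id := by
      show φ (-0) = id
      rw [neg_zero, hφ0]
    have hψadd : ∀ a b, ψ (a + b) = ψ a ∘ ψ b := by
      intro a b
      show φ (-(a + b)) = φ (-a) ∘ φ (-b)
      rw [neg_add, hφadd]
    have hψm : Measurable fun p : ℝ × M => ψ p.1 p.2 := by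
      have h : (fun p : ℝ × M => ψ p.1 p.2)
          = (fun p : ℝ × M => φ p.1 p.2) ∘ (fun p : ℝ × M => (-p.1, p.2)) := rfl
      rw [h]
      exact hφm.comp (measurable_fst.neg.prodMk measurable_snd)
    have hψmp : ∀ u, MeasurePreserving (ψ u) μ μ := fun u => hmp (-u)
    have h1 : φ t = ψ (-t) := by
      show φ t = φ (-(-t))
      rw [neg_neg]
    rw [h1]
    rw [AbramovAux.master hψ0 hψadd hψm hψmp (show (0:ℝ) < -t by linarith)]
    have h2 : ψ 1 = φ (-1 : ℝ) := rfl
    rw [h2, AbramovAux.metricEntropy_neg_one hφ0 hφadd hφm hmp]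
    rw [abs_of_neg ht]
  · rw [hφ0, AbramovAux.metricEntropy_id]
    simp
  · rw [AbramovAux.master hφ0 hφadd hφm hmp ht, abs_of_pos ht]
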